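/- arXiv:1112.4107 — 6 statements merged into one kernel-verified Lean document; each statement's English description precedes it below -/
import Mathlib

section
/- Let V be a nonzero finite-dimensional complex vector space and let T : V → V be a linear map all of whose eigenvalues have modulus 1. Then for every v ∈ V \ {0} there exists a unique natural number k such that the set of cluster points of the sequence ( (Choose(m,k))⁻¹ · Tᵐ v )_{m ∈ ℕ} is nonempty and contained in E \ {0}, where E is the linear span of the set of all eigenvectors of T and Choose(m,k) denotes the binomial coefficient. -/
open Filter Topology


private lemma choose_ratio_atTop {j k : ℕ} (h : j < k) :
    Tendsto (fun m : ℕ => (m.choose k : ℝ) / (m.choose j : ℝ)) atTop atTop := by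
  have step : ∀ t : ℕ, Tendsto
      (fun m : ℕ => (m.choose (t + 1) : ℝ) / (m.choose t : ℝ)) atTop atTop := by
    intro t
    have h1 : Tendsto (fun m : ℕ => ((m : ℝ) - t) / (t + 1)) atTop atTop := by
      apply Tendsto.atTop_div_const (by positivity)
      exact tendsto_atTop_add_const_right _ _ tendsto_natCast_atTop_atTop
    refine h1.congr' ?_
    filter_upwards [eventually_ge_atTop (t + 1)] with m hm
    have ht : t ≤ m := le_of_lt hm
    have hch : (m.choose (t + 1) : ℝ) * (t + 1) = (m.choose t : ℝ) * (m - t) := by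
      have := Nat.choose_succ_right_eq m t
      have := congrArg (fun x : ℕ => (x : ℝ)) this
      push_cast [Nat.cast_sub ht] at this
      linarith [this]
    have hpos : (0 : ℝ) < (m.choose t : ℝ) := by
      exact_mod_cast Nat.choose_pos ht
    field_simp
    linarith [hch]
  induction k with
  | zero => omega
  | succ k ih =>
    rcases Nat.lt_succ_iff_lt_or_eq.mp h with h' | rfl
    · have h2 := (step k).atTop_mul_atTop₀ (ih h')
      refine h2.congr' ?_
      filter_upwards [eventually_ge_atTop (k + 1)] with m hm
      have hk : (0 : ℝ) < (m.choose k : ℝ) := by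
        exact_mod_cast Nat.choose_pos (by omega)
      field_simp
    · exact step j

private lemma choose_ratio_zero {j k : ℕ} (h : j < k) :
    Tendsto (fun m : ℕ => (m.choose j : ℝ) / (m.choose k : ℝ)) atTop (𝓝 0) := by
  have := (choose_ratio_atTop h).inv_tendsto_atTop
  refine this.congr fun m => ?_
  rw [Pi.inv_apply, inv_div]

private lemma mapClusterPt_trans {V : Type*} [NormedAddCommGroup V]
    {f g : ℕ → V} (h : Tendsto (fun m => f m - g m) atTop (𝓝 0)) {p : V}
    (hc : MapClusterPt p atTop g) : MapClusterPt p atTop f := by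
  rw [mapClusterPt_iff_frequently] at hc ⊢
  intro s hs
  obtain ⟨ε, hε, hball⟩ := Metric.mem_nhds_iff.mp hs
  have h2 : ∀ᶠ m in atTop, ‖f m - g m‖ < ε / 2 := by
    have := Metric.tendsto_nhds.mp h (ε / 2) (by positivity)
    simpa [dist_eq_norm] using this
  have h3 := hc (Metric.ball p (ε / 2)) (Metric.ball_mem_nhds p (by positivity))
  refine ((h3.and_eventually h2).mono ?_)
  rintro m ⟨hm1, hm2⟩
  apply hball
  rw [Metric.mem_ball, dist_eq_norm] at hm1 ⊢
  calc ‖f m - p‖ = ‖(f m - g m) + (g m - p)‖ := by rw [sub_add_sub_cancel]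
    _ ≤ ‖f m - g m‖ + ‖g m - p‖ := norm_add_le _ _
    _ < ε / 2 + ε / 2 := by linarith
    _ = ε := by ring

private lemma not_mapClusterPt_of_norm_atTop {V : Type*} [NormedAddCommGroup V]
    {f : ℕ → V} (h : Tendsto (fun m => ‖f m‖) atTop atTop) (p : V) :
    ¬ MapClusterPt p atTop f := by
  intro hc
  have h1 := (mapClusterPt_iff_frequently.mp hc) (Metric.ball p 1) (Metric.ball_mem_nhds p one_pos)
  have h2 : ∀ᶠ m in atTop, ‖p‖ + 1 ≤ ‖f m‖ := h.eventually_ge_atTop _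
  obtain ⟨m, hm1, hm2⟩ := (h1.and_eventually h2).exists
  rw [Metric.mem_ball, dist_eq_norm] at hm1
  have := norm_sub_norm_le (f m) p
  linarith

private lemma aeval_apply_eigenvector {V : Type*} [AddCommGroup V] [Module ℂ V]
    {T : Module.End ℂ V} {μ : ℂ} {x : V} (hx : T x = μ • x) (P : Polynomial ℂ) :
    (Polynomial.aeval T P) x = P.eval μ • x := by
  have hpow : ∀ n : ℕ, (T ^ n) x = μ ^ n • x := by
    intro n
    induction n with
    | zero => simp
    | succ n ih =>
        rw [pow_succ', Module.End.mul_apply, ih, map_smul, hx, smul_smul, ← pow_succ]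
  induction P using Polynomial.induction_on' with
  | add p q hp hq => simp [hp, hq, add_smul]
  | monomial n a =>
      simp [Polynomial.aeval_monomial, Module.End.mul_apply, Module.algebraMap_end_apply,
        hpow, smul_smul, mul_comm]

/-- Let `V` be a nonzero finite-dimensional complex vector space and
`T : V → V` a linear map all of whose eigenvalues have modulus 1.  Then for every
`v ∈ V \ {0}` there is a unique `k : ℕ` such that the set of cluster points of the
sequence `(Choose(m,k))⁻¹ • Tᵐ v` is nonempty and contained in `E \ {0}`, where `E` is
the span of the set of all eigenvectors of `T`. -/
theorem stmt0 {V : Type*} [NormedAddCommGroup V] [NormedSpace ℂ V]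
    [FiniteDimensional ℂ V] [Nontrivial V]
    (T : V →ₗ[ℂ] V)
    (hT : ∀ μ : ℂ, Module.End.HasEigenvalue (T : Module.End ℂ V) μ → ‖μ‖ = 1)
    (v : V) (hv : v ≠ 0) :
    ∃! k : ℕ,
      {p : V | MapClusterPt p atTop
          (fun m : ℕ => ((m.choose k : ℂ))⁻¹ • (T ^ m) v)}.Nonempty ∧
      {p : V | MapClusterPt p atTop
          (fun m : ℕ => ((m.choose k : ℂ))⁻¹ • (T ^ m) v)} ⊆
        (Submodule.span ℂ {x : V | x ≠ 0 ∧ ∃ μ : ℂ, T x = μ • x} : Set V) \ {0} := by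
  classical
  have hdec : v ∈ ⨆ μ : ℂ, Module.End.maxGenEigenspace (T : Module.End ℂ V) μ := by
    rw [Module.End.iSup_maxGenEigenspace_eq_top]; trivial
  obtain ⟨c, hcmem, hsum⟩ := (Submodule.mem_iSup_iff_exists_finsupp _ _).mp hdec
  have key : ∀ μ : ℂ, ∃ l : ℕ, ((T - μ • (1 : Module.End ℂ V)) ^ l) (c μ) = 0 := fun μ =>
    (Module.End.mem_maxGenEigenspace _ _ _).mp (hcmem μ)
  choose nn hnn using key
  set N : ℂ → Module.End ℂ V := fun μ => T - μ • 1 with hN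
  set kk : ℂ → ℕ := fun μ => Nat.findGreatest (fun j => (N μ ^ j) (c μ) ≠ 0) (nn μ) with hkk
  set s : Finset ℂ := c.support with hs
  have hsne : s.Nonempty := by
    rw [Finset.nonempty_iff_ne_empty]
    intro h
    apply hv
    rw [← hsum, Finsupp.sum, ← hs, h, Finset.sum_empty]
  have hcne : ∀ μ ∈ s, c μ ≠ 0 := fun μ hμ => Finsupp.mem_support_iff.mp hμ
  have hzero : ∀ μ, ∀ j, kk μ < j → (N μ ^ j) (c μ) = 0 := by
    intro μ j hj
    by_cases hjn : j ≤ nn μ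
    · by_contra hne
      exact absurd (Nat.le_findGreatest hjn hne) (not_le.mpr hj)
    · push_neg at hjn
      have h1 : j = (j - nn μ) + nn μ := (Nat.sub_add_cancel hjn.le).symm
      rw [h1, pow_add, Module.End.mul_apply, hnn, map_zero]
  set w : ℂ → V := fun μ => (N μ ^ kk μ) (c μ) with hw
  have hwne : ∀ μ ∈ s, w μ ≠ 0 := by
    intro μ hμ
    exact Nat.findGreatest_spec (P := fun j => (N μ ^ j) (c μ) ≠ 0) (Nat.zero_le _)
      (by simpa using hcne μ hμ)
  have hweig : ∀ μ ∈ s, T (w μ) = μ • w μ := by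
    intro μ hμ
    have h0 : (N μ) (w μ) = 0 := by
      have h1 := hzero μ (kk μ + 1) (Nat.lt_succ_self _)
      rw [pow_succ', Module.End.mul_apply] at h1
      exact h1
    have h2 : T (w μ) - μ • w μ = 0 := by
      simpa [hN, LinearMap.sub_apply] using h0
    exact sub_eq_zero.mp h2
  have hμ1 : ∀ μ ∈ s, ‖μ‖ = 1 := by
    intro μ hμ
    refine hT μ (Module.End.hasEigenvalue_of_hasEigenvector ⟨?_, hwne μ hμ⟩)
    exact Module.End.mem_eigenspace_iff.mpr (hweig μ hμ)
  set k : ℕ := s.sup kk with hk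
  have hkle : ∀ μ ∈ s, kk μ ≤ k := fun μ hμ => Finset.le_sup hμ
  obtain ⟨μ₀, hμ₀s, hμ₀k⟩ := Finset.exists_mem_eq_sup s hsne kk
  have hμ₀k' : kk μ₀ = k := (hk.trans hμ₀k).symm
  set s' : Finset ℂ := s.filter (fun μ => kk μ = k) with hs'
  have hμ₀s' : μ₀ ∈ s' := Finset.mem_filter.mpr ⟨hμ₀s, hμ₀k'⟩
  have hsub' : ∀ μ ∈ s', μ ∈ s := fun μ hμ => (Finset.mem_filter.mp hμ).1
  set F : ℕ → V := fun m => ((m.choose k : ℂ))⁻¹ • (T ^ m) v with hF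
  set g : ℕ → V := fun m => ∑ μ ∈ s', μ ^ (m - k) • w μ with hg
  -- binomial expansion of T^m on each generalized eigenvector
  have hTm : ∀ μ ∈ s, ∀ m, k ≤ m → (T ^ m) (c μ)
      = ∑ j ∈ Finset.range (k + 1), (m.choose j : ℂ) • μ ^ (m - j) • ((N μ ^ j) (c μ)) := by
    intro μ hμ m hm
    have hcm : Commute (N μ) ((μ • 1 : Module.End ℂ V)) := (Commute.one_right _).smul_right μ
    have hTe : N μ + μ • (1 : Module.End ℂ V) = T := sub_add_cancel T (μ • 1)
    have h1 : (T ^ m) (c μ) = ∑ j ∈ Finset.range (m + 1),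
        (m.choose j : ℂ) • μ ^ (m - j) • ((N μ ^ j) (c μ)) := by
      rw [← hTe, hcm.add_pow]
      rw [LinearMap.sum_apply]
      refine Finset.sum_congr rfl fun j hj => ?_
      rw [Module.End.mul_apply, Module.End.mul_apply, Module.End.natCast_apply]
      rw [smul_pow, one_pow]
      rw [LinearMap.smul_apply, Module.End.one_apply]
      rw [← Nat.cast_smul_eq_nsmul ℂ]
      rw [map_smul, map_smul]
      rw [smul_comm]
    rw [h1]
    refine (Finset.sum_subset (Finset.range_subset_range.mpr (by omega)) ?_).symm
    intro j hj1 hj2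
    have hj3 : kk μ < j := by
      rw [Finset.mem_range] at hj2
      have := hkle μ hμ
      omega
    rw [hzero μ j hj3, smul_zero, smul_zero]
  have hvs : v = ∑ μ ∈ s, c μ := by rw [← hsum]; rfl
  have hexp : ∀ m, k ≤ m → F m
      = (∑ μ ∈ s, ∑ j ∈ Finset.range k,
          ((m.choose k : ℂ))⁻¹ • (m.choose j : ℂ) • μ ^ (m - j) • ((N μ ^ j) (c μ))) + g m := by
    intro m hm
    have hck : ((m.choose k : ℂ)) ≠ 0 := Nat.cast_ne_zero.mpr (Nat.choose_pos hm).ne'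
    have hgm : g m = ∑ μ ∈ s, μ ^ (m - k) • ((N μ ^ k) (c μ)) := by
      have hvan : ∀ μ ∈ s, μ ^ (m - k) • ((N μ ^ k) (c μ)) ≠ 0 → kk μ = k := by
        intro μ hμ hne
        by_contra h
        have hlt : kk μ < k := lt_of_le_of_ne (hkle μ hμ) h
        exact hne (by rw [hzero μ k hlt, smul_zero])
      simp only [hg]
      have h7 : ∀ μ ∈ s', μ ^ (m - k) • w μ = μ ^ (m - k) • ((N μ ^ k) (c μ)) := by
        intro μ hμ
        have h8 := (Finset.mem_filter.mp hμ).2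
        simp only [hw]
        rw [h8]
      rw [Finset.sum_congr rfl h7]
      exact Finset.sum_filter_of_ne hvan
    calc F m = ((m.choose k : ℂ))⁻¹ • (T ^ m) (∑ μ ∈ s, c μ) := by
          rw [← hvs]
      _ = ∑ μ ∈ s, ((m.choose k : ℂ))⁻¹ • ((T ^ m) (c μ)) := by
          rw [map_sum, Finset.smul_sum]
      _ = ∑ μ ∈ s, ((∑ j ∈ Finset.range k,
            ((m.choose k : ℂ))⁻¹ • (m.choose j : ℂ) • μ ^ (m - j) • ((N μ ^ j) (c μ)))
            + μ ^ (m - k) • ((N μ ^ k) (c μ))) := by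
          refine Finset.sum_congr rfl fun μ hμ => ?_
          rw [hTm μ hμ m hm, Finset.smul_sum, Finset.sum_range_succ]
          congr 1
          rw [smul_smul, smul_smul, inv_mul_cancel₀ hck, one_mul]
      _ = _ := by rw [Finset.sum_add_distrib, hgm]
  -- the error term tends to zero
  have htend : Tendsto (fun m => F m - g m) atTop (𝓝 0) := by
    have h1 : Tendsto (fun m : ℕ => ∑ μ ∈ s, ∑ j ∈ Finset.range k,
        ((m.choose k : ℂ))⁻¹ • (m.choose j : ℂ) • μ ^ (m - j) • ((N μ ^ j) (c μ)))
        atTop (𝓝 0) := by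
      have h2 : Tendsto (fun m : ℕ => ∑ μ ∈ s, ∑ j ∈ Finset.range k,
          ((m.choose k : ℂ))⁻¹ • (m.choose j : ℂ) • μ ^ (m - j) • ((N μ ^ j) (c μ)))
          atTop (𝓝 (∑ μ ∈ s, ∑ j ∈ Finset.range k, (0 : V))) := by
        refine tendsto_finset_sum s fun μ hμ => tendsto_finset_sum (Finset.range k) fun j hj => ?_
        have hjk : j < k := Finset.mem_range.mp hj
        apply squeeze_zero_norm
          (a := fun m : ℕ => (m.choose j : ℝ) / (m.choose k : ℝ) * ‖(N μ ^ j) (c μ)‖)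
        · intro m
          rw [norm_smul, norm_smul, norm_smul, norm_pow, hμ1 μ hμ, one_pow, one_mul]
          rw [norm_inv, Complex.norm_natCast, Complex.norm_natCast]
          rw [div_eq_inv_mul, mul_assoc]
        · simpa using (choose_ratio_zero hjk).mul_const ‖(N μ ^ j) (c μ)‖
      simpa using h2
    refine Tendsto.congr' ?_ h1
    filter_upwards [eventually_ge_atTop k] with m hm
    rw [hexp m hm]
    abel
  -- bounds for g
  set B : ℝ := ∑ μ ∈ s', ‖w μ‖ with hBdef
  have hgB : ∀ m, ‖g m‖ ≤ B := by
    intro m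
    refine (norm_sum_le _ _).trans (le_of_eq ?_)
    refine Finset.sum_congr rfl fun μ hμ => ?_
    rw [norm_smul, norm_pow, hμ1 μ (hsub' μ hμ), one_pow, one_mul]
  -- g has a cluster point
  have hgcluster : ∃ p : V, MapClusterPt p atTop g := by
    obtain ⟨p, -, φ, hφ, hlim⟩ := tendsto_subseq_of_bounded
      (Metric.isBounded_closedBall (x := (0 : V)) (r := B))
      (fun m => by simpa [Metric.mem_closedBall, dist_zero_right] using hgB m)
    exact ⟨p, MapClusterPt.of_comp hφ.tendsto_atTop hlim.mapClusterPt⟩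
  -- the separating operator L
  set P : Polynomial ℂ := ∏ ν ∈ s.erase μ₀, (Polynomial.X - Polynomial.C ν) with hP
  have hPμ₀ : P.eval μ₀ ≠ 0 := by
    rw [hP, Polynomial.eval_prod]
    refine Finset.prod_ne_zero_iff.mpr fun ν hν => ?_
    simp only [Polynomial.eval_sub, Polynomial.eval_X, Polynomial.eval_C]
    exact sub_ne_zero.mpr (Ne.symm (Finset.ne_of_mem_erase hν))
  have hPμ : ∀ μ ∈ s', μ ≠ μ₀ → P.eval μ = 0 := by
    intro μ hμ hne
    rw [hP, Polynomial.eval_prod]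
    exact Finset.prod_eq_zero (Finset.mem_erase.mpr ⟨hne, hsub' μ hμ⟩) (by simp)
  set L : V →L[ℂ] V := LinearMap.toContinuousLinearMap (Polynomial.aeval (T : Module.End ℂ V) P) with hL
  have hLg : ∀ m, L (g m) = μ₀ ^ (m - k) • P.eval μ₀ • w μ₀ := by
    intro m
    have h1 : L (g m) = ∑ μ ∈ s', μ ^ (m - k) • P.eval μ • w μ := by
      rw [hg, map_sum]
      refine Finset.sum_congr rfl fun μ hμ => ?_
      rw [map_smul]
      congr 1
      exact aeval_apply_eigenvector (hweig μ (hsub' μ hμ)) P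
    rw [h1]
    rw [Finset.sum_eq_single μ₀ (fun μ hμ hne => by rw [hPμ μ hμ hne, zero_smul, smul_zero])
      (fun h => absurd hμ₀s' h)]
  set c₀ : ℝ := ‖P.eval μ₀ • w μ₀‖ with hc₀def
  have hc₀ : 0 < c₀ := norm_pos_iff.mpr (smul_ne_zero hPμ₀ (hwne μ₀ hμ₀s))
  have hLgn : ∀ m, ‖L (g m)‖ = c₀ := by
    intro m
    rw [hLg, norm_smul, norm_pow, hμ1 μ₀ hμ₀s, one_pow, one_mul]
  have hLn : 0 < ‖L‖ := by
    rcases (norm_nonneg L).lt_or_eq with h | h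
    · exact h
    · exfalso
      have hL0 : L = 0 := by
        rwa [eq_comm, ContinuousLinearMap.opNorm_zero_iff] at h
      have := hLgn 0
      rw [hL0] at this
      simp at this
      exact hc₀.ne this
  have hglow : ∀ m, c₀ / ‖L‖ ≤ ‖g m‖ := by
    intro m
    rw [div_le_iff₀ hLn]
    have := L.le_opNorm (g m)
    rw [hLgn m] at this
    linarith
  -- membership of g in the eigenvector span
  have hgE : ∀ m, g m ∈ Submodule.span ℂ {x : V | x ≠ 0 ∧ ∃ μ : ℂ, T x = μ • x} := by
    intro m
    refine Submodule.sum_mem _ fun μ hμ => Submodule.smul_mem _ _ (Submodule.subset_span ?_)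
    exact ⟨hwne μ (hsub' μ hμ), μ, hweig μ (hsub' μ hμ)⟩
  have hEclosed : IsClosed ((Submodule.span ℂ {x : V | x ≠ 0 ∧ ∃ μ : ℂ, T x = μ • x} : Submodule ℂ V) : Set V) :=
    Submodule.closed_of_finiteDimensional _
  -- upper and lower eventual bounds on ‖F m‖
  have hFup : ∀ᶠ m in atTop, ‖F m‖ ≤ B + 1 := by
    have hev : ∀ᶠ m in atTop, ‖F m - g m‖ < 1 := by
      have := Metric.tendsto_nhds.mp htend 1 one_pos
      simpa [dist_eq_norm] using this
    filter_upwards [hev] with m hm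
    have h1 : ‖F m‖ - ‖g m‖ ≤ ‖F m - g m‖ := norm_sub_norm_le _ _
    have := hgB m
    linarith
  have hFlow : ∀ᶠ m in atTop, c₀ / ‖L‖ / 2 ≤ ‖F m‖ := by
    have hev : ∀ᶠ m in atTop, ‖F m - g m‖ < c₀ / ‖L‖ / 2 := by
      have := Metric.tendsto_nhds.mp htend (c₀ / ‖L‖ / 2) (by positivity)
      simpa [dist_eq_norm] using this
    filter_upwards [hev] with m hm
    have h1 : ‖g m‖ - ‖F m‖ ≤ ‖g m - F m‖ := norm_sub_norm_le _ _
    rw [norm_sub_rev] at h1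
    have := hglow m
    linarith
  refine ⟨k, ⟨?_, ?_⟩, ?_⟩
  · -- nonempty
    obtain ⟨p, hp⟩ := hgcluster
    exact ⟨p, mapClusterPt_trans htend hp⟩
  · -- containment
    intro p hp
    have hpF : MapClusterPt p atTop F := hp
    have hpg : MapClusterPt p atTop g := by
      refine mapClusterPt_trans ?_ hpF
      simpa using htend.neg
    constructor
    · have hle : Filter.map g atTop ≤ 𝓟 ((Submodule.span ℂ {x : V | x ≠ 0 ∧ ∃ μ : ℂ, T x = μ • x} : Submodule ℂ V) : Set V) := by
        rw [Filter.le_principal_iff, Filter.mem_map]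
        exact Filter.Eventually.of_forall hgE
      have h1 : p ∈ closure ((Submodule.span ℂ {x : V | x ≠ 0 ∧ ∃ μ : ℂ, T x = μ • x} : Submodule ℂ V) : Set V) :=
        mem_closure_iff_clusterPt.mpr (hpg.clusterPt.mono hle)
      rwa [hEclosed.closure_eq] at h1
    · simp only [Set.mem_singleton_iff]
      intro hp0
      have h2 : MapClusterPt (‖L p‖) atTop ((fun x => ‖x‖) ∘ (L ∘ g)) :=
        ((hpg.continuousAt_comp (L.continuous.continuousAt)).continuousAt_comp
          (continuous_norm.continuousAt))
      have h3 : ((fun x : V => ‖x‖) ∘ (L ∘ g)) = fun _ : ℕ => c₀ := by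
        funext m
        exact hLgn m
      rw [h3] at h2
      have h4 : ‖L p‖ = c₀ := by
        have h5 : ClusterPt (‖L p‖) (𝓟 {c₀}) := by
          have := h2.clusterPt
          rwa [Filter.map_const, ← Filter.principal_singleton] at this
        have h6 := mem_closure_iff_clusterPt.mpr h5
        simpa using h6
      rw [hp0, map_zero, norm_zero] at h4
      exact hc₀.ne h4
  · -- uniqueness
    intro k' hk'
    obtain ⟨⟨p', hp'⟩, hsubset⟩ := hk'
    by_contra hne
    have hnorm' : ∀ m, k ≤ m → ‖((m.choose k' : ℂ))⁻¹ • (T ^ m) v‖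
        = (m.choose k : ℝ) / (m.choose k') * ‖F m‖ := by
      intro m hm
      have hck : ((m.choose k : ℂ)) ≠ 0 := Nat.cast_ne_zero.mpr (Nat.choose_pos hm).ne'
      have hTv : (T ^ m) v = (m.choose k : ℂ) • F m := by
        rw [hF, smul_inv_smul₀ hck]
      rw [hTv, norm_smul, norm_smul, norm_inv, Complex.norm_natCast, Complex.norm_natCast]
      rw [div_eq_inv_mul, mul_assoc]
    rcases lt_or_gt_of_ne hne with hlt | hgt
    · -- k' < k : norms blow up, no cluster points
      refine not_mapClusterPt_of_norm_atTop ?_ p' hp'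
      have hrat := (choose_ratio_atTop hlt).atTop_mul_const (r := c₀ / ‖L‖ / 2) (by positivity)
      refine tendsto_atTop_mono' atTop ?_ hrat
      filter_upwards [eventually_ge_atTop k, hFlow] with m hm hlowm
      rw [hnorm' m hm]
      have hr0 : (0 : ℝ) ≤ (m.choose k : ℝ) / (m.choose k') := by positivity
      exact mul_le_mul_of_nonneg_left hlowm hr0
    · -- k' > k : sequence tends to 0, so 0 is a cluster point, contradiction
      have h0 : Tendsto (fun m : ℕ => ((m.choose k' : ℂ))⁻¹ • (T ^ m) v) atTop (𝓝 0) := by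
        refine squeeze_zero_norm'
          (a := fun m : ℕ => (m.choose k : ℝ) / (m.choose k') * (B + 1)) ?_ ?_
        · filter_upwards [eventually_ge_atTop k, hFup] with m hm hup
          rw [hnorm' m hm]
          have hr0 : (0 : ℝ) ≤ (m.choose k : ℝ) / (m.choose k') := by positivity
          exact mul_le_mul_of_nonneg_left hup hr0
        · simpa using (choose_ratio_zero hgt).mul_const (B + 1)
      have h00 : MapClusterPt (0 : V) atTop
          (fun m : ℕ => ((m.choose k' : ℂ))⁻¹ • (T ^ m) v) := h0.mapClusterPt
      exact (hsubset h00).2 rfl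
end

section
/- Let γ̃ ∈ SL(n+1,ℂ) and let γ = [[γ̃]] be the induced projective transformation of ℙⁿ. Then the family of maps { γᵐ : m ∈ ℤ } is equicontinuous at every point of ℙⁿ if and only if γ̃ is diagonalizable and every eigenvalue of γ̃ has modulus 1. -/
open Filter Topology Matrix

noncomputable section

instance (n : ℕ) : TopologicalSpace (Projectivization ℂ (Fin n → ℂ)) :=
  inferInstanceAs (TopologicalSpace (Quotient _))

/-- The projective transformation `[[A]]` of `ℙⁿ` induced by `A ∈ GL(n+1, ℂ)`,
sending `[v]` to `[A v]`. -/
def projAct {n : ℕ} (A : GL (Fin n) ℂ) :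
    Projectivization ℂ (Fin n → ℂ) → Projectivization ℂ (Fin n → ℂ) :=
  Projectivization.map
    (LinearMap.GeneralLinearGroup.toLinearEquiv (Matrix.GeneralLinearGroup.toLin A)).toLinearMap
    (LinearMap.GeneralLinearGroup.toLinearEquiv (Matrix.GeneralLinearGroup.toLin A)).injective

/-- A matrix is diagonalizable if it is conjugate to a diagonal matrix. -/
def IsDiagonalizable {n : ℕ} (A : Matrix (Fin n) (Fin n) ℂ) : Prop :=
  ∃ (P : GL (Fin n) ℂ) (d : Fin n → ℂ),
    (↑(P⁻¹) : Matrix (Fin n) (Fin n) ℂ) * A * (↑P : Matrix (Fin n) (Fin n) ℂ) =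
      Matrix.diagonal d

/-- The standard hermitian inner product on `ℂⁿ`. -/
def herm {n : ℕ} (v w : Fin n → ℂ) : ℂ := ∑ j, starRingEnd ℂ (v j) * w j

/-- The chordal Fubini–Study distance on `ℙⁿ`; it is a metric compatible with the
quotient topology of `ℙⁿ`, and since `ℙⁿ` is compact Hausdorff it induces the unique
uniform structure compatible with that topology. -/
def pdist {n : ℕ} (x y : Projectivization ℂ (Fin n → ℂ)) : ℝ :=
  Real.sqrt (1 - ‖herm x.rep y.rep‖ ^ 2 /
    ((herm x.rep x.rep).re * (herm y.rep y.rep).re))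

namespace St2

variable {N : ℕ}

abbrev EN (N : ℕ) := EuclideanSpace ℂ (Fin N)

def toE {N : ℕ} (v : Fin N → ℂ) : EN N := (WithLp.equiv 2 (Fin N → ℂ)).symm v

lemma toE_add (v w : Fin N → ℂ) : toE (v + w) = toE v + toE w := rfl
lemma toE_smul (a : ℂ) (v : Fin N → ℂ) : toE (a • v) = a • toE v := rfl
lemma toE_eq_zero {v : Fin N → ℂ} : toE v = 0 ↔ v = 0 := by
  rw [show (0 : EN N) = toE 0 from rfl]
  exact (WithLp.equiv 2 (Fin N → ℂ)).symm.injective.eq_iff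

lemma herm_inner (v w : Fin N → ℂ) :
    herm v w = (inner ℂ (toE v) (toE w) : ℂ) := by
  simp [herm, toE, PiLp.inner_apply, RCLike.inner_apply, mul_comm]

lemma herm_self_re (v : Fin N → ℂ) : (herm v v).re = ‖toE v‖ ^ 2 := by
  rw [herm_inner]
  exact_mod_cast @inner_self_eq_norm_sq ℂ _ _ _ _ (toE v)

def pd (v w : EN N) : ℝ :=
  Real.sqrt (1 - ‖(inner ℂ v w : ℂ)‖ ^ 2 / (‖v‖ ^ 2 * ‖w‖ ^ 2))

lemma pd_nonneg (v w : EN N) : 0 ≤ pd v w := Real.sqrt_nonneg _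

lemma pd_smul (a b : ℂ) (ha : a ≠ 0) (hb : b ≠ 0) (v w : EN N) :
    pd (a • v) (b • w) = pd v w := by
  unfold pd
  congr 1
  rw [inner_smul_left, inner_smul_right, norm_smul, norm_smul, norm_mul, norm_mul,
    RCLike.norm_conj]
  have h1 : ‖a‖ ≠ 0 := norm_ne_zero_iff.2 ha
  have h2 : ‖b‖ ≠ 0 := norm_ne_zero_iff.2 hb
  have e1 : (‖a‖ * (‖b‖ * ‖(inner ℂ v w : ℂ)‖)) ^ 2
      = (‖a‖ ^ 2 * ‖b‖ ^ 2) * ‖(inner ℂ v w : ℂ)‖ ^ 2 := by ring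
  have e2 : (‖a‖ * ‖v‖) ^ 2 * (‖b‖ * ‖w‖) ^ 2
      = (‖a‖ ^ 2 * ‖b‖ ^ 2) * (‖v‖ ^ 2 * ‖w‖ ^ 2) := by ring
  rw [e1, e2, mul_div_mul_left]
  positivity

lemma pd_self (v : EN N) (hv : v ≠ 0) : pd v v = 0 := by
  unfold pd
  rw [inner_self_eq_norm_sq_to_K (𝕜 := ℂ)]
  have hv' : (0:ℝ) < ‖v‖ := norm_pos_iff.2 hv
  simp only [norm_pow, RCLike.norm_ofReal, abs_norm]
  rw [show (‖v‖ ^ 2) ^ 2 = ‖v‖ ^ 2 * ‖v‖ ^ 2 from by ring, div_self (by positivity),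
    sub_self, Real.sqrt_zero]

lemma pd_lt_one_of_indep {v w : EN N} (hv : v ≠ 0) (hw : w ≠ 0)
    (h : ∀ c : ℂ, w ≠ c • v) : ‖(inner ℂ v w : ℂ)‖ ^ 2 / (‖v‖ ^ 2 * ‖w‖ ^ 2) < 1 := by
  have hlt : ‖(inner ℂ v w : ℂ)‖ < ‖v‖ * ‖w‖ := by
    rcases lt_or_eq_of_le (norm_inner_le_norm (𝕜 := ℂ) v w) with h' | h'
    · exact h'
    · exfalso
      obtain ⟨r, -, hr⟩ := (norm_inner_eq_norm_iff hv hw).1 h'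
      exact h r hr
  have h1 : (0:ℝ) < ‖v‖ := norm_pos_iff.2 hv
  have h2 : (0:ℝ) < ‖w‖ := norm_pos_iff.2 hw
  rw [div_lt_one (by positivity)]
  calc ‖(inner ℂ v w : ℂ)‖ ^ 2 < (‖v‖ * ‖w‖) ^ 2 := by
        apply sq_lt_sq' _ hlt
        nlinarith [norm_nonneg (inner ℂ v w : ℂ), mul_nonneg (norm_nonneg v) (norm_nonneg w)]
    _ = ‖v‖ ^ 2 * ‖w‖ ^ 2 := by ring

lemma pd_pos {v w : EN N} (hv : v ≠ 0) (hw : w ≠ 0)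
    (h : ∀ c : ℂ, w ≠ c • v) : 0 < pd v w := by
  apply Real.sqrt_pos.2
  linarith [pd_lt_one_of_indep hv hw h]

lemma pd_proj {v w : EN N} (hv : v ≠ 0) (hw : w ≠ 0) :
    pd v w = ‖w - ((inner ℂ v w : ℂ) / ((‖v‖ : ℂ) ^ 2)) • v‖ / ‖w‖ := by
  set c : ℂ := (inner ℂ v w : ℂ) / ((‖v‖ : ℂ) ^ 2) with hc
  set q : EN N := w - c • v with hq
  have hnv : ((‖v‖ : ℂ)) ^ 2 ≠ 0 :=
    pow_ne_zero 2 (Complex.ofReal_ne_zero.2 (norm_ne_zero_iff.2 hv))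
  have hvq : (inner ℂ v q : ℂ) = 0 := by
    rw [hq, inner_sub_right, inner_smul_right, hc,
      inner_self_eq_norm_sq_to_K (𝕜 := ℂ)]
    field_simp
    simp [hv]
  have hpyth : ‖w‖ ^ 2 = ‖c • v‖ ^ 2 + ‖q‖ ^ 2 := by
    have : w = c • v + q := by rw [hq]; abel
    rw [this, norm_add_sq (𝕜 := ℂ)]
    have : (inner ℂ (c • v) q : ℂ) = 0 := by
      rw [inner_smul_left, hvq, mul_zero]
    rw [this]
    simp
  have hcv : ‖c • v‖ ^ 2 = ‖(inner ℂ v w : ℂ)‖ ^ 2 / ‖v‖ ^ 2 := by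
    rw [norm_smul, hc, mul_pow, norm_div, div_pow, norm_pow]
    have : ‖((‖v‖:ℂ))‖ = ‖v‖ := by simp
    rw [this]
    have hv' : ‖v‖ ≠ 0 := norm_ne_zero_iff.2 hv
    field_simp
  have hv0 : (0:ℝ) < ‖v‖ := norm_pos_iff.2 hv
  have hw0 : (0:ℝ) < ‖w‖ := norm_pos_iff.2 hw
  have hv' : (0:ℝ) < ‖v‖ ^ 2 := by positivity
  have hw' : (0:ℝ) < ‖w‖ ^ 2 := by positivity
  unfold pd
  have key : 1 - ‖(inner ℂ v w : ℂ)‖ ^ 2 / (‖v‖ ^ 2 * ‖w‖ ^ 2) = ‖q‖ ^ 2 / ‖w‖ ^ 2 := by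
    rw [hcv] at hpyth
    have hQ : ‖q‖ ^ 2 = ‖w‖ ^ 2 - ‖(inner ℂ v w : ℂ)‖ ^ 2 / ‖v‖ ^ 2 := by linarith
    rw [hQ]
    field_simp
  rw [key, show ‖q‖ ^ 2 / ‖w‖ ^ 2 = (‖q‖ / ‖w‖) ^ 2 by ring,
    Real.sqrt_sq (by positivity)]

lemma pd_lip (T S : EN N →L[ℂ] EN N) (hST : ∀ x, S (T x) = x)
    {v w : EN N} (hv : v ≠ 0) (hw : w ≠ 0) :
    pd (T v) (T w) ≤ ‖T‖ * ‖S‖ * pd v w := by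
  have hTv : T v ≠ 0 := fun h => hv (by rw [← hST v, h, map_zero])
  have hTw : T w ≠ 0 := fun h => hw (by rw [← hST w, h, map_zero])
  set c : ℂ := (inner ℂ v w : ℂ) / ((‖v‖ : ℂ) ^ 2) with hc
  set q : EN N := w - c • v with hq
  set c' : ℂ := (inner ℂ (T v) (T w) : ℂ) / ((‖T v‖ : ℂ) ^ 2) with hc'
  set q' : EN N := T w - c' • T v with hq'
  have hTvq' : (inner ℂ (T v) q' : ℂ) = 0 := by
    rw [hq', inner_sub_right, inner_smul_right, hc',
      inner_self_eq_norm_sq_to_K (𝕜 := ℂ)]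
    have : ((‖T v‖:ℂ)) ^ 2 ≠ 0 :=
      pow_ne_zero 2 (Complex.ofReal_ne_zero.2 (norm_ne_zero_iff.2 hTv))
    field_simp
    simp [hTv]
  have hdecomp : T q = q' + (c' - c) • T v := by
    rw [hq', hq, map_sub, ContinuousLinearMap.map_smul]
    module
  have hq'Tq : ‖q'‖ ≤ ‖T q‖ := by
    have hperp : (inner ℂ q' ((c' - c) • T v) : ℂ) = 0 := by
      rw [inner_smul_right]
      have : (inner ℂ q' (T v) : ℂ) = 0 := by
        rw [← inner_conj_symm, hTvq', map_zero]
      rw [this, mul_zero]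
    have : ‖T q‖ ^ 2 = ‖q'‖ ^ 2 + ‖(c' - c) • T v‖ ^ 2 := by
      rw [hdecomp, norm_add_sq (𝕜 := ℂ), hperp]
      simp
    nlinarith [norm_nonneg (T q), norm_nonneg q', norm_nonneg ((c' - c) • T v)]
  have hTq : ‖T q‖ ≤ ‖T‖ * ‖q‖ := T.le_opNorm q
  have hwS : ‖w‖ ≤ ‖S‖ * ‖T w‖ := by
    conv_lhs => rw [← hST w]
    exact S.le_opNorm (T w)
  rw [pd_proj hTv hTw, pd_proj hv hw, ← hc, ← hq, ← hc', ← hq']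
  have hTwpos : (0:ℝ) < ‖T w‖ := norm_pos_iff.2 hTw
  have hwpos : (0:ℝ) < ‖w‖ := norm_pos_iff.2 hw
  rw [div_le_iff₀ hTwpos]
  have hSpos : (0:ℝ) ≤ ‖S‖ := norm_nonneg _
  have hTpos : (0:ℝ) ≤ ‖T‖ := norm_nonneg _
  calc ‖q'‖ ≤ ‖T‖ * ‖q‖ := hq'Tq.trans hTq
    _ = ‖T‖ * ‖q‖ * (‖w‖ / ‖w‖) := by rw [div_self (ne_of_gt hwpos), mul_one]
    _ = ‖T‖ * (‖q‖ / ‖w‖) * ‖w‖ := by ring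
    _ ≤ ‖T‖ * (‖q‖ / ‖w‖) * (‖S‖ * ‖T w‖) := by
        exact mul_le_mul_of_nonneg_left hwS
          (mul_nonneg hTpos (div_nonneg (norm_nonneg q) (norm_nonneg w)))
    _ = ‖T‖ * ‖S‖ * (‖q‖ / ‖w‖) * ‖T w‖ := by ring

lemma pd_continuousAt {x : EN N} {y : EN N} (hx : x ≠ 0) (hy : y ≠ 0) :
    ContinuousAt (fun w : EN N => pd x w) y := by
  apply Real.continuous_sqrt.continuousAt.comp
  apply ContinuousAt.sub continuousAt_const
  apply ContinuousAt.div
  · exact ((continuous_const.inner continuous_id).norm.pow 2).continuousAt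
  · exact (continuousAt_const.mul ((continuous_id.norm.pow 2).continuousAt))
  · exact mul_ne_zero (pow_ne_zero 2 (norm_ne_zero_iff.2 hx))
      (pow_ne_zero 2 (norm_ne_zero_iff.2 hy))


lemma pdist_eq {N : ℕ} (x y : Projectivization ℂ (Fin N → ℂ)) :
    pdist x y = pd (toE x.rep) (toE y.rep) := by
  unfold pdist pd
  rw [herm_inner, herm_self_re, herm_self_re]

lemma pdist_mk {N : ℕ} {v w : Fin N → ℂ} (hv : v ≠ 0) (hw : w ≠ 0) :
    pdist (Projectivization.mk ℂ v hv) (Projectivization.mk ℂ w hw) = pd (toE v) (toE w) := by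
  rw [pdist_eq]
  obtain ⟨a, ha⟩ := (Projectivization.mk_eq_mk_iff ℂ _ _
    (Projectivization.rep_nonzero _) hv).1 (Projectivization.mk_rep _)
  obtain ⟨b, hb⟩ := (Projectivization.mk_eq_mk_iff ℂ _ _
    (Projectivization.rep_nonzero _) hw).1 (Projectivization.mk_rep _)
  rw [← ha, ← hb, Units.smul_def, Units.smul_def, toE_smul, toE_smul,
    pd_smul _ _ a.ne_zero b.ne_zero]

lemma mulVec_unit_ne {N : ℕ} (B : GL (Fin N) ℂ) {v : Fin N → ℂ} (hv : v ≠ 0) :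
    (↑B : Matrix (Fin N) (Fin N) ℂ) *ᵥ v ≠ 0 := by
  intro h
  apply hv
  have h1 : (↑(B⁻¹) : Matrix (Fin N) (Fin N) ℂ) * (↑B : Matrix (Fin N) (Fin N) ℂ) = 1 :=
    Units.inv_mul B
  calc v = (1 : Matrix (Fin N) (Fin N) ℂ) *ᵥ v := (Matrix.one_mulVec v).symm
    _ = ((↑(B⁻¹) : Matrix (Fin N) (Fin N) ℂ) * ↑B) *ᵥ v := by rw [h1]
    _ = (↑(B⁻¹) : Matrix (Fin N) (Fin N) ℂ) *ᵥ ((↑B : Matrix (Fin N) (Fin N) ℂ) *ᵥ v) :=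
        (Matrix.mulVec_mulVec _ _ _).symm
    _ = 0 := by rw [h, Matrix.mulVec_zero]

lemma projAct_mk {N : ℕ} (B : GL (Fin N) ℂ) {v : Fin N → ℂ} (hv : v ≠ 0) :
    projAct B (Projectivization.mk ℂ v hv)
      = Projectivization.mk ℂ ((↑B : Matrix (Fin N) (Fin N) ℂ) *ᵥ v) (mulVec_unit_ne B hv) := by
  unfold projAct
  rw [Projectivization.map_mk]
  rfl

lemma pow_mulVec_eigen {N : ℕ} {A : Matrix (Fin N) (Fin N) ℂ} {lam : ℂ} {v : Fin N → ℂ}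
    (h : A *ᵥ v = lam • v) : ∀ k : ℕ, (A ^ k) *ᵥ v = lam ^ k • v := by
  intro k
  induction k with
  | zero => simp
  | succ k ih =>
      rw [pow_succ, ← Matrix.mulVec_mulVec, h, Matrix.mulVec_smul, ih, smul_smul, pow_succ]
      ring_nf

lemma jordan_pow {N : ℕ} {A : Matrix (Fin N) (Fin N) ℂ} {lam : ℂ} {v w : Fin N → ℂ}
    (hv : A *ᵥ v = lam • v) (hw : A *ᵥ w = lam • w + v) :
    ∀ k : ℕ, (A ^ (k + 1)) *ᵥ w = lam ^ (k + 1) • w + (((k : ℂ) + 1) * lam ^ k) • v := by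
  intro k
  induction k with
  | zero => simpa using hw
  | succ k ih =>
      rw [show k + 1 + 1 = (k + 1) + 1 from rfl, pow_succ', ← Matrix.mulVec_mulVec, ih,
        Matrix.mulVec_add, Matrix.mulVec_smul, Matrix.mulVec_smul, hv, hw]
      push_cast
      match_scalars <;> ring

lemma coe_units_pow_nat {N : ℕ} (B : GL (Fin N) ℂ) (k : ℕ) :
    (↑(B ^ (k : ℤ)) : Matrix (Fin N) (Fin N) ℂ) = (↑B : Matrix (Fin N) (Fin N) ℂ) ^ k := by
  rw [zpow_natCast, Units.val_pow_eq_pow_val]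

lemma exists_eigenvector_of_mem_spectrum {N : ℕ} {A : Matrix (Fin N) (Fin N) ℂ} {μ : ℂ}
    (h : μ ∈ spectrum ℂ A) : ∃ v : Fin N → ℂ, v ≠ 0 ∧ A *ᵥ v = μ • v := by
  have h1 : μ ∈ spectrum ℂ (Matrix.toLinAlgEquiv' A) := by
    rwa [AlgEquiv.spectrum_eq Matrix.toLinAlgEquiv' A]
  have h2 : Module.End.HasEigenvalue (Matrix.toLinAlgEquiv' A) μ :=
    Module.End.hasEigenvalue_iff_mem_spectrum.2 h1
  obtain ⟨v, hv⟩ := h2.exists_hasEigenvector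
  refine ⟨v, hv.2, ?_⟩
  have := Module.End.mem_eigenspace_iff.1 hv.1
  rw [← this]
  rfl

lemma mem_spectrum_of_root {N : ℕ} {A : Matrix (Fin N) (Fin N) ℂ} {μ : ℂ}
    (h : (Matrix.charpoly A).IsRoot μ) : μ ∈ spectrum ℂ A := by
  rw [spectrum.mem_iff]
  intro hUnit
  have hdet := (Matrix.isUnit_iff_isUnit_det _).1 hUnit
  have key : (algebraMap ℂ (Matrix (Fin N) (Fin N) ℂ) μ - A).det
      = (Matrix.charpoly A).eval μ := by
    rw [Matrix.charpoly, ← Polynomial.coe_evalRingHom, RingHom.map_det]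
    congr 1
    ext i j
    by_cases hij : i = j
    · subst hij
      simp [Matrix.charmatrix_apply_eq, Matrix.algebraMap_matrix_apply]
    · simp [Matrix.charmatrix_apply_ne _ _ _ hij, Matrix.algebraMap_matrix_apply, hij]
  rw [key, h.eq_zero] at hdet
  exact (not_isUnit_zero : ¬ IsUnit (0:ℂ)) hdet

lemma exists_lt_pair {n : ℕ} {A : Matrix (Fin (n+1)) (Fin (n+1)) ℂ} (hdet : A.det = 1)
    (h : ¬ ∀ μ ∈ spectrum ℂ A, ‖μ‖ = 1) :
    ∃ lam mu, lam ∈ spectrum ℂ A ∧ mu ∈ spectrum ℂ A ∧ ‖lam‖ < ‖mu‖ := by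
  push_neg at h
  obtain ⟨μ₀, hμ₀, hnorm⟩ := h
  by_contra hno
  push_neg at hno
  have hall : ∀ μ ∈ spectrum ℂ A, ‖μ‖ = ‖μ₀‖ := fun μ hμ =>
    le_antisymm (hno μ₀ μ hμ₀ hμ) (hno μ μ₀ hμ hμ₀)
  set R := (Matrix.charpoly A).roots with hR
  have hroots : ∀ x ∈ R, ‖x‖ = ‖μ₀‖ := by
    intro x hx
    exact hall x (mem_spectrum_of_root (Polynomial.isRoot_of_mem_roots hx))
  have hcard : Multiset.card R = n + 1 := by
    have hs : (Matrix.charpoly A).Splits := IsAlgClosed.splits _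
    have := (Polynomial.Splits.natDegree_eq_card_roots hs).symm
    rwa [Matrix.charpoly_natDegree_eq_dim, Fintype.card_fin] at this
  have hprod : A.det = R.prod := Matrix.det_eq_prod_roots_charpoly A
  have h1 : ‖A.det‖ = 1 := by rw [hdet, norm_one]
  have h2 : ‖R.prod‖ = ‖μ₀‖ ^ (n + 1) := by
    have hmap : R.map (fun x => ‖x‖) = Multiset.replicate (n + 1) ‖μ₀‖ := by
      rw [Multiset.eq_replicate]
      constructor
      · rw [Multiset.card_map, hcard]
      · intro x hx
        obtain ⟨y, hy, rfl⟩ := Multiset.mem_map.1 hx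
        exact hroots y hy
    calc ‖R.prod‖ = (R.map (fun x => ‖x‖)).prod := by
          exact_mod_cast map_multiset_prod (normHom : ℂ →*₀ ℝ) R
      _ = ‖μ₀‖ ^ (n + 1) := by rw [hmap, Multiset.prod_replicate]
  rw [hprod] at h1
  rw [h2] at h1
  have h0 : (0:ℝ) ≤ ‖μ₀‖ := norm_nonneg _
  rcases lt_trichotomy ‖μ₀‖ 1 with hlt | heq | hgt
  · have := pow_lt_one₀ h0 hlt (n := n + 1) (Nat.succ_ne_zero n)
    linarith
  · exact hnorm heq
  · have := one_lt_pow₀ hgt (n := n + 1) (Nat.succ_ne_zero n)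
    linarith

lemma isDiag_of_forall {N : ℕ} (A : Matrix (Fin N) (Fin N) ℂ)
    (H : ∀ (μ : ℂ) (x : Fin N → ℂ),
      (Matrix.toLin' A - μ • 1) ((Matrix.toLin' A - μ • 1) x) = 0 →
      (Matrix.toLin' A - μ • 1) x = 0) :
    IsDiagonalizable A := by
  classical
  set f : Module.End ℂ (Fin N → ℂ) := Matrix.toLin' A with hf
  have hker : ∀ (μ : ℂ) (k : ℕ) (x : Fin N → ℂ),
      ((f - μ • 1) ^ k) x = 0 → (f - μ • 1) x = 0 := by
    intro μ k
    induction k with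
    | zero =>
        intro x hx
        simp only [pow_zero, Module.End.one_apply] at hx
        rw [hx, map_zero]
    | succ k ih =>
        intro x hx
        have hx' : ((f - μ • 1) ^ k) ((f - μ • 1) x) = 0 := by
          rw [← Module.End.mul_apply, ← pow_succ]
          exact hx
        exact H μ x (ih _ hx')
  have hsup : ⨆ μ : ℂ, f.eigenspace μ = ⊤ := by
    rw [eq_top_iff, ← Module.End.iSup_maxGenEigenspace_eq_top f]
    refine iSup_le fun μ => le_trans ?_ (le_iSup _ μ)
    intro x hx
    obtain ⟨k, hk⟩ := (Module.End.mem_maxGenEigenspace f μ x).1 hx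
    have h2 := hker μ k x hk
    rw [Module.End.mem_eigenspace_iff]
    have : f x - μ • x = 0 := by
      simpa [LinearMap.sub_apply, LinearMap.smul_apply, Module.End.one_apply] using h2
    linear_combination (norm := module) this
  have hInd := Module.End.eigenspaces_iSupIndep f
  have hInt := DirectSum.isInternal_submodule_of_iSupIndep_of_iSup_eq_top hInd hsup
  let bs : ∀ μ : ℂ, Module.Basis (Module.Free.ChooseBasisIndex ℂ (f.eigenspace μ)) ℂ (f.eigenspace μ) :=
    fun μ => Module.Free.chooseBasis ℂ _
  let b0 := hInt.collectedBasis bs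
  have hb0 : ∀ a, f (b0 a) = a.1 • b0 a := by
    intro a
    have hmem : (b0 a : Fin N → ℂ) ∈ f.eigenspace a.1 := by
      rw [hInt.collectedBasis_coe]
      exact Submodule.coe_mem _
    exact Module.End.mem_eigenspace_iff.1 hmem
  let c : Module.Basis (Fin N) ℂ (Fin N → ℂ) := Pi.basisFun ℂ (Fin N)
  let e := b0.indexEquiv c
  let b := b0.reindex e
  let d : Fin N → ℂ := fun i => (e.symm i).1
  have hb : ∀ i, f (b i) = d i • b i := by
    intro i
    rw [Module.Basis.reindex_apply]
    exact hb0 _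
  have hdiag : LinearMap.toMatrix b b f = Matrix.diagonal d := by
    ext i j
    rw [LinearMap.toMatrix_apply, hb j, _root_.map_smul]
    rcases eq_or_ne i j with rfl | hij
    · simp [Matrix.diagonal_apply_eq]
    · simp [Matrix.diagonal_apply_ne _ hij, Module.Basis.repr_self,
        Finsupp.single_apply, Ne.symm hij]
  have hA : LinearMap.toMatrix c c f = A := by
    have h1 : f = Matrix.toLin c c A := by
      rw [show Matrix.toLin c c = Matrix.toLin' from Matrix.toLin_eq_toLin']
    rw [h1, LinearMap.toMatrix_toLin]
  have hrel := basis_toMatrix_mul_linearMap_toMatrix_mul_basis_toMatrix (b' := c) (c' := c)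
    (b := b) (c := b) (f := f)
  rw [hA, hdiag] at hrel
  letI : Invertible (c.toMatrix b) := c.invertibleToMatrix b
  let P : GL (Fin N) ℂ := unitOfInvertible (c.toMatrix b)
  have hPinv : (↑(P⁻¹) : Matrix (Fin N) (Fin N) ℂ) = b.toMatrix c := by
    rw [Matrix.coe_units_inv]
    show (c.toMatrix b)⁻¹ = b.toMatrix c
    exact Matrix.inv_eq_left_inv (Module.Basis.toMatrix_mul_toMatrix_flip b c)
  refine ⟨P, d, ?_⟩
  rw [hPinv]
  show b.toMatrix c * A * c.toMatrix b = Matrix.diagonal d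
  exact hrel

lemma toEuclideanCLM_piLp_equiv_symm' {N : ℕ} (M : Matrix (Fin N) (Fin N) ℂ) (x : Fin N → ℂ) :
    Matrix.toEuclideanCLM (𝕜 := ℂ) M ((WithLp.equiv 2 (Fin N → ℂ)).symm x)
      = (WithLp.equiv 2 (Fin N → ℂ)).symm (Matrix.toLin' M x) := rfl

lemma norm_diag_le_one {N : ℕ} (e : Fin N → ℂ) (he : ∀ i, ‖e i‖ ≤ 1) :
    ‖Matrix.toEuclideanCLM (𝕜 := ℂ) (Matrix.diagonal e)‖ ≤ 1 := by
  apply ContinuousLinearMap.opNorm_le_bound _ zero_le_one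
  intro x
  rw [one_mul]
  have hx : x = (WithLp.equiv 2 (Fin N → ℂ)).symm ((WithLp.equiv 2 (Fin N → ℂ)) x) := rfl
  rw [hx, toEuclideanCLM_piLp_equiv_symm']
  set y := (WithLp.equiv 2 (Fin N → ℂ)) x with hy
  rw [EuclideanSpace.norm_eq, EuclideanSpace.norm_eq]
  apply Real.sqrt_le_sqrt
  apply Finset.sum_le_sum
  intro i _
  have h1 : ((WithLp.equiv 2 (Fin N → ℂ)).symm (Matrix.toLin' (Matrix.diagonal e) y)) i
      = e i * y i := by
    rw [Matrix.toLin'_apply, WithLp.equiv_symm_apply, PiLp.toLp_apply, Matrix.mulVec_diagonal]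
  have h2 : ((WithLp.equiv 2 (Fin N → ℂ)).symm y) i = y i := rfl
  rw [h1, h2, norm_mul]
  have h3 := he i
  have hn : (0:ℝ) ≤ ‖y i‖ := norm_nonneg _
  have h4 : ‖e i‖ * ‖y i‖ ≤ ‖y i‖ := mul_le_of_le_one_left hn h3
  exact pow_le_pow_left₀ (mul_nonneg (norm_nonneg _) hn) h4 2

lemma toE_mulVec {N : ℕ} (M : Matrix (Fin N) (Fin N) ℂ) (v : Fin N → ℂ) :
    Matrix.toEuclideanCLM (𝕜 := ℂ) M (toE v) = toE (M *ᵥ v) := by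
  rw [toE, toEuclideanCLM_piLp_equiv_symm', Matrix.toLin'_apply]
  rfl

lemma backward {n : ℕ} (A : Matrix.SpecialLinearGroup (Fin (n + 1)) ℂ)
    (hdiag : IsDiagonalizable (A : Matrix (Fin (n + 1)) (Fin (n + 1)) ℂ))
    (hspec : ∀ μ ∈ spectrum ℂ (A : Matrix (Fin (n + 1)) (Fin (n + 1)) ℂ), ‖μ‖ = 1) :
    ∀ z : Projectivization ℂ (Fin (n + 1) → ℂ), ∀ ε > (0 : ℝ), ∃ δ > (0 : ℝ),
      ∀ w : Projectivization ℂ (Fin (n + 1) → ℂ), pdist z w < δ →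
        ∀ m : ℤ, pdist (projAct (Matrix.SpecialLinearGroup.toGL A ^ m) z)
          (projAct (Matrix.SpecialLinearGroup.toGL A ^ m) w) < ε := by
  classical
  obtain ⟨P, d, hPd⟩ := hdiag
  set G := Matrix.SpecialLinearGroup.toGL A with hG
  have hGc : (↑G : Matrix (Fin (n+1)) (Fin (n+1)) ℂ) = (↑A : Matrix (Fin (n+1)) (Fin (n+1)) ℂ) := rfl
  have hAunit : IsUnit (↑A : Matrix (Fin (n+1)) (Fin (n+1)) ℂ) := by
    rw [Matrix.isUnit_iff_isUnit_det, Matrix.SpecialLinearGroup.det_coe]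
    exact isUnit_one
  have hDunit : IsUnit (Matrix.diagonal d) := by
    rw [← hPd]
    exact ((P⁻¹).isUnit.mul hAunit).mul P.isUnit
  have hd0 : ∀ i, d i ≠ 0 := by
    intro i
    have := (Matrix.isUnit_iff_isUnit_det _).1 hDunit
    rw [Matrix.det_diagonal, isUnit_iff_ne_zero] at this
    exact fun h => this (Finset.prod_eq_zero (Finset.mem_univ i) h)
  have hd1 : ∀ i, ‖d i‖ = 1 := by
    intro i
    apply hspec
    have h1 : d i ∈ spectrum ℂ (Matrix.diagonal d) := by
      rw [spectrum_diagonal]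
      exact ⟨i, rfl⟩
    rw [← hPd, spectrum.units_conjugate'] at h1
    exact h1
  set Dg : GL (Fin (n+1)) ℂ := P⁻¹ * G * P with hDg
  have hDgc : (↑Dg : Matrix (Fin (n+1)) (Fin (n+1)) ℂ) = Matrix.diagonal d := by
    rw [hDg, Units.val_mul, Units.val_mul, hGc, hPd]
  have hconj : ∀ m : ℤ, G ^ m = P * Dg ^ m * P⁻¹ := by
    intro m
    have h1 : G = P * Dg * P⁻¹ := by rw [hDg]; group
    calc G ^ m = (P * Dg * P⁻¹) ^ m := by rw [← h1]
      _ = (MulAut.conj P Dg) ^ m := by rw [MulAut.conj_apply]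
      _ = MulAut.conj P (Dg ^ m) := (map_zpow _ _ _).symm
      _ = P * Dg ^ m * P⁻¹ := MulAut.conj_apply _ _
  have hDm : ∀ m : ℤ, (↑(Dg ^ m) : Matrix (Fin (n+1)) (Fin (n+1)) ℂ)
      = Matrix.diagonal (fun i => d i ^ m) := by
    intro m
    induction m using Int.induction_on with
    | zero => simp
    | succ k ih =>
        rw [_root_.zpow_add_one, Units.val_mul, ih, hDgc, Matrix.diagonal_mul_diagonal]
        exact congrArg Matrix.diagonal (funext fun i => (zpow_add_one₀ (hd0 i) _).symm)
    | pred k ih =>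
        rw [_root_.zpow_sub_one, Units.val_mul, ih]
        have hinv : (↑(Dg⁻¹) : Matrix (Fin (n+1)) (Fin (n+1)) ℂ)
            = Matrix.diagonal (fun i => (d i)⁻¹) := by
          rw [Matrix.coe_units_inv, hDgc]
          apply Matrix.inv_eq_right_inv
          rw [Matrix.diagonal_mul_diagonal]
          have : (fun i => d i * (d i)⁻¹) = fun _ : Fin (n+1) => (1:ℂ) :=
            funext fun i => mul_inv_cancel₀ (hd0 i)
          rw [this, Matrix.diagonal_one]
        rw [hinv, Matrix.diagonal_mul_diagonal]
        exact congrArg Matrix.diagonal (funext fun i => (zpow_sub_one₀ (hd0 i) _).symm)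
  set Φ := Matrix.toEuclideanCLM (𝕜 := ℂ) (n := Fin (n+1)) with hΦ
  set C : ℝ := ‖Φ ↑P‖ * ‖Φ ↑(P⁻¹)‖ with hC
  have hCnn : 0 ≤ C := mul_nonneg (norm_nonneg _) (norm_nonneg _)
  have hC1 : (1:ℝ) ≤ C := by
    have h1 : (Φ ↑P) * (Φ ↑(P⁻¹)) = 1 := by
      rw [← _root_.map_mul]
      have : (↑P : Matrix (Fin (n+1)) (Fin (n+1)) ℂ)
          * (↑(P⁻¹) : Matrix (Fin (n+1)) (Fin (n+1)) ℂ) = 1 := Units.mul_inv P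
      rw [this, _root_.map_one]
    calc (1:ℝ) = ‖(1 : EN (n+1) →L[ℂ] EN (n+1))‖ := (norm_one).symm
      _ = ‖(Φ ↑P) * (Φ ↑(P⁻¹))‖ := by rw [h1]
      _ ≤ C := norm_mul_le _ _
  have hBound : ∀ m : ℤ, ‖Φ (↑(G ^ m) : Matrix (Fin (n+1)) (Fin (n+1)) ℂ)‖ ≤ C := by
    intro m
    rw [hconj m, Units.val_mul, Units.val_mul, _root_.map_mul, _root_.map_mul]
    have hmid : ‖Φ ↑(Dg ^ m)‖ ≤ 1 := by
      rw [hDm m]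
      apply norm_diag_le_one
      intro i
      rw [norm_zpow, hd1 i, _root_.one_zpow]
    calc ‖Φ ↑P * Φ ↑(Dg ^ m) * Φ ↑(P⁻¹)‖
        ≤ ‖Φ ↑P * Φ ↑(Dg ^ m)‖ * ‖Φ ↑(P⁻¹)‖ := norm_mul_le _ _
      _ ≤ ‖Φ ↑P‖ * ‖Φ ↑(Dg ^ m)‖ * ‖Φ ↑(P⁻¹)‖ := by
          apply mul_le_mul_of_nonneg_right (norm_mul_le _ _) (norm_nonneg _)
      _ ≤ ‖Φ ↑P‖ * 1 * ‖Φ ↑(P⁻¹)‖ := by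
          apply mul_le_mul_of_nonneg_right _ (norm_nonneg _)
          exact mul_le_mul_of_nonneg_left hmid (norm_nonneg _)
      _ = C := by rw [mul_one]
  intro z ε hε
  refine ⟨ε / (C ^ 2 + 1), by positivity, ?_⟩
  intro w hw m
  rw [← Projectivization.mk_rep z, ← Projectivization.mk_rep w, projAct_mk, projAct_mk,
    pdist_mk]
  rw [pdist_eq] at hw
  have hTS : ∀ x : EN (n+1), Φ (↑((G ^ m)⁻¹) : Matrix (Fin (n+1)) (Fin (n+1)) ℂ)
      (Φ (↑(G ^ m) : Matrix (Fin (n+1)) (Fin (n+1)) ℂ) x) = x := by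
    intro x
    rw [← ContinuousLinearMap.mul_apply, ← _root_.map_mul]
    have : (↑((G ^ m)⁻¹) : Matrix (Fin (n+1)) (Fin (n+1)) ℂ)
        * (↑(G ^ m) : Matrix (Fin (n+1)) (Fin (n+1)) ℂ) = 1 :=
      Units.inv_mul (G ^ m)
    rw [this, _root_.map_one, ContinuousLinearMap.one_apply]
  have hzE : toE z.rep ≠ 0 := fun h => z.rep_nonzero (toE_eq_zero.1 h)
  have hwE : toE w.rep ≠ 0 := fun h => w.rep_nonzero (toE_eq_zero.1 h)
  have key := pd_lip (Φ (↑(G ^ m))) (Φ (↑((G ^ m)⁻¹))) hTS hzE hwE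
  rw [toE_mulVec, toE_mulVec] at key
  have hB1 : ‖Φ (↑(G ^ m) : Matrix (Fin (n+1)) (Fin (n+1)) ℂ)‖ ≤ C := hBound m
  have hB2 : ‖Φ (↑((G ^ m)⁻¹) : Matrix (Fin (n+1)) (Fin (n+1)) ℂ)‖ ≤ C := by
    rw [← _root_.zpow_neg]
    exact hBound (-m)
  have hpdnn := pd_nonneg (toE z.rep) (toE w.rep)
  calc pd (toE ((↑(G ^ m) : Matrix (Fin (n+1)) (Fin (n+1)) ℂ) *ᵥ z.rep))
        (toE ((↑(G ^ m) : Matrix (Fin (n+1)) (Fin (n+1)) ℂ) *ᵥ w.rep))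
      ≤ ‖Φ (↑(G ^ m))‖ * ‖Φ (↑((G ^ m)⁻¹))‖ * pd (toE z.rep) (toE w.rep) := key
    _ ≤ C * C * pd (toE z.rep) (toE w.rep) := by
        apply mul_le_mul_of_nonneg_right _ hpdnn
        exact mul_le_mul hB1 hB2 (norm_nonneg _) hCnn
    _ < C * C * (ε / (C ^ 2 + 1)) := by
        apply mul_lt_mul_of_pos_left hw
        nlinarith
    _ ≤ ε := by
        rw [div_eq_mul_inv]
        rw [show C * C * (ε * (C ^ 2 + 1)⁻¹) = ε * (C ^ 2 * (C ^ 2 + 1)⁻¹) by ring]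
        have h2 : C ^ 2 * (C ^ 2 + 1)⁻¹ ≤ 1 := by
          rw [← div_eq_mul_inv, div_le_one (by positivity)]
          linarith
        nlinarith

lemma forward_spec {n : ℕ} (A : Matrix.SpecialLinearGroup (Fin (n + 1)) ℂ)
    (h : ∀ z : Projectivization ℂ (Fin (n + 1) → ℂ), ∀ ε > (0 : ℝ), ∃ δ > (0 : ℝ),
      ∀ w : Projectivization ℂ (Fin (n + 1) → ℂ), pdist z w < δ →
        ∀ m : ℤ, pdist (projAct (Matrix.SpecialLinearGroup.toGL A ^ m) z)
          (projAct (Matrix.SpecialLinearGroup.toGL A ^ m) w) < ε) :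
    ∀ μ ∈ spectrum ℂ (A : Matrix (Fin (n + 1)) (Fin (n + 1)) ℂ), ‖μ‖ = 1 := by
  by_contra hcon
  obtain ⟨lam, mu, hlam, hmu, hlt⟩ :=
    exists_lt_pair (Matrix.SpecialLinearGroup.det_coe A) hcon
  obtain ⟨v, hv0, hv⟩ := exists_eigenvector_of_mem_spectrum hlam
  obtain ⟨w, hw0, hw⟩ := exists_eigenvector_of_mem_spectrum hmu
  have hAunit : IsUnit (↑A : Matrix (Fin (n+1)) (Fin (n+1)) ℂ) := by
    rw [Matrix.isUnit_iff_isUnit_det, Matrix.SpecialLinearGroup.det_coe]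
    exact isUnit_one
  have hmu0 : mu ≠ 0 := by
    rintro rfl
    exact ((spectrum.zero_mem_iff ℂ).1 hmu) hAunit
  have hlam0 : lam ≠ 0 := by
    rintro rfl
    exact ((spectrum.zero_mem_iff ℂ).1 hlam) hAunit
  have hlamne : lam ≠ mu := fun hn => absurd hlt (by rw [hn]; exact lt_irrefl _)
  have hind : ∀ a b : ℂ, a • v + b • w = 0 → a = 0 ∧ b = 0 := by
    intro a b hab
    have h2 : (a * lam) • v + (b * mu) • w = 0 := by
      have h2' := congrArg (fun x => (↑A : Matrix (Fin (n+1)) (Fin (n+1)) ℂ) *ᵥ x) hab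
      simpa [Matrix.mulVec_add, Matrix.mulVec_smul, hv, hw, smul_smul] using h2'
    have h3 : (b * (mu - lam)) • w = 0 := by
      linear_combination (norm := module) h2 - lam • hab
    have hb : b = 0 := by
      by_contra hb
      have hc : b * (mu - lam) ≠ 0 := mul_ne_zero hb (sub_ne_zero.2 (Ne.symm hlamne))
      exact hw0 ((smul_eq_zero.1 h3).resolve_left hc)
    refine ⟨?_, hb⟩
    rw [hb, zero_smul, add_zero] at hab
    exact (smul_eq_zero.1 hab).resolve_right hv0
  have hvE : toE v ≠ 0 := fun hh => hv0 (toE_eq_zero.1 hh)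
  have hwE : toE w ≠ 0 := fun hh => hw0 (toE_eq_zero.1 hh)
  have hdep : ∀ c : ℂ, toE w ≠ c • toE v := by
    intro c hc
    have hcw : w = c • v := by
      rw [← toE_smul] at hc
      exact (WithLp.equiv 2 (Fin (n+1) → ℂ)).symm.injective hc
    have := hind c (-1) (by rw [hcw]; module)
    simpa using this.2
  set d0 := pd (toE v) (toE w) with hd0def
  have hd0 : 0 < d0 := pd_pos hvE hwE hdep
  obtain ⟨δ, hδ, hh⟩ := h (Projectivization.mk ℂ v hv0) (d0 / 2) (by positivity)
  have hlim1 : Tendsto (fun s : ℂ => pd (toE v) (toE (v + s • w))) (𝓝 0) (𝓝 0) := by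
    have hmap : Tendsto (fun s : ℂ => toE v + s • toE w) (𝓝 0) (𝓝 (toE v)) := by
      have hcont : Continuous (fun s : ℂ => toE v + s • toE w) :=
        continuous_const.add (continuous_id.smul continuous_const)
      simpa using hcont.tendsto 0
    have hcomp := (pd_continuousAt hvE hvE).tendsto.comp hmap
    rw [pd_self _ hvE] at hcomp
    have hfun : (fun s : ℂ => pd (toE v) (toE (v + s • w)))
        = (fun y => pd (toE v) y) ∘ (fun s : ℂ => toE v + s • toE w) :=
      funext fun s => by simp [Function.comp, toE_add, toE_smul]
    rw [hfun]
    exact hcomp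
  obtain ⟨t, htδ, ht0⟩ := (((hlim1.eventually (gt_mem_nhds hδ)).filter_mono
    (nhdsWithin_le_nhds (s := {(0:ℂ)}ᶜ))).and eventually_mem_nhdsWithin).exists
  rw [Set.mem_compl_iff, Set.mem_singleton_iff] at ht0
  have hvtw : v + t • w ≠ 0 := by
    intro hzz
    have := hind 1 t (by rw [← hzz]; module)
    exact one_ne_zero this.1
  have hy := hh (Projectivization.mk ℂ (v + t • w) hvtw)
    (by rw [pdist_mk hv0 hvtw]; exact htδ)
  set q : ℂ := lam / mu with hq
  have hqlt : ‖q‖ < 1 := by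
    rw [hq, norm_div]
    exact (div_lt_one (lt_of_le_of_lt (norm_nonneg _) hlt)).2 hlt
  have hu : Tendsto (fun k : ℕ => t⁻¹ * q ^ k) atTop (𝓝 0) := by
    have h5 := tendsto_pow_atTop_nhds_zero_of_norm_lt_one hqlt
    have h6 := h5.const_mul (t⁻¹)
    simpa using h6
  have himg : ∀ k : ℕ,
      pdist (projAct (Matrix.SpecialLinearGroup.toGL A ^ (k : ℤ)) (Projectivization.mk ℂ v hv0))
        (projAct (Matrix.SpecialLinearGroup.toGL A ^ (k : ℤ))
          (Projectivization.mk ℂ (v + t • w) hvtw))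
      = pd (toE v) (toE ((t⁻¹ * q ^ k) • v + w)) := by
    intro k
    have hne2 : (t⁻¹ * q ^ k) • v + w ≠ 0 := by
      intro hzz
      have := hind (t⁻¹ * q ^ k) 1 (by rw [← hzz]; module)
      exact one_ne_zero this.2
    rw [projAct_mk, projAct_mk]
    have hcoe : (↑(Matrix.SpecialLinearGroup.toGL A ^ (k : ℤ))
        : Matrix (Fin (n+1)) (Fin (n+1)) ℂ) = (↑A : Matrix (Fin (n+1)) (Fin (n+1)) ℂ) ^ k :=
      coe_units_pow_nat _ k
    have e1 : (↑A : Matrix (Fin (n+1)) (Fin (n+1)) ℂ) ^ k *ᵥ v = lam ^ k • v :=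
      pow_mulVec_eigen hv k
    have e2 : (↑A : Matrix (Fin (n+1)) (Fin (n+1)) ℂ) ^ k *ᵥ (v + t • w)
        = lam ^ k • v + (t * mu ^ k) • w := by
      rw [Matrix.mulVec_add, Matrix.mulVec_smul, pow_mulVec_eigen hv k,
        pow_mulVec_eigen hw k, smul_smul]
    have hmk1 : Projectivization.mk ℂ
        ((↑(Matrix.SpecialLinearGroup.toGL A ^ (k : ℤ)) : Matrix (Fin (n+1)) (Fin (n+1)) ℂ) *ᵥ v)
        (mulVec_unit_ne _ hv0) = Projectivization.mk ℂ v hv0 := by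
      rw [Projectivization.mk_eq_mk_iff]
      refine ⟨Units.mk0 (lam ^ k) (pow_ne_zero k hlam0), ?_⟩
      rw [Units.smul_def, Units.val_mk0, hcoe, e1]
    have hmk2 : Projectivization.mk ℂ
        ((↑(Matrix.SpecialLinearGroup.toGL A ^ (k : ℤ)) : Matrix (Fin (n+1)) (Fin (n+1)) ℂ)
          *ᵥ (v + t • w))
        (mulVec_unit_ne _ hvtw) = Projectivization.mk ℂ ((t⁻¹ * q ^ k) • v + w) hne2 := by
      rw [Projectivization.mk_eq_mk_iff]
      refine ⟨Units.mk0 (t * mu ^ k) (mul_ne_zero ht0 (pow_ne_zero k hmu0)), ?_⟩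
      have hsc : (t * mu ^ k) * (t⁻¹ * q ^ k) = lam ^ k := by
        rw [hq, div_pow]
        field_simp
      rw [Units.smul_def, Units.val_mk0, hcoe, e2, smul_add, smul_smul, hsc]
    rw [hmk1, hmk2, pdist_mk hv0 hne2]
  have hlim2 : Tendsto (fun k : ℕ => pd (toE v) (toE ((t⁻¹ * q ^ k) • v + w))) atTop (𝓝 d0) := by
    have hmap : Tendsto (fun u : ℂ => u • toE v + toE w) (𝓝 0) (𝓝 (toE w)) := by
      have hcont : Continuous (fun u : ℂ => u • toE v + toE w) :=
        (continuous_id.smul continuous_const).add continuous_const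
      simpa using hcont.tendsto 0
    have hcomp := (pd_continuousAt hvE hwE).tendsto.comp (hmap.comp hu)
    have hfun : (fun k : ℕ => pd (toE v) (toE ((t⁻¹ * q ^ k) • v + w)))
        = (fun y => pd (toE v) y)
          ∘ ((fun u : ℂ => u • toE v + toE w) ∘ (fun k : ℕ => t⁻¹ * q ^ k)) :=
      funext fun k => by simp [Function.comp, toE_add, toE_smul]
    rw [hfun]
    exact hcomp
  have hev3 : ∀ᶠ k : ℕ in atTop,
      d0 / 2 < pd (toE v) (toE ((t⁻¹ * q ^ k) • v + w)) :=
    hlim2.eventually (lt_mem_nhds (by linarith))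
  obtain ⟨k, hk⟩ := hev3.exists
  have hfin := hy (k : ℤ)
  rw [himg k] at hfin
  linarith

lemma forward_diag {n : ℕ} (A : Matrix.SpecialLinearGroup (Fin (n + 1)) ℂ)
    (h : ∀ z : Projectivization ℂ (Fin (n + 1) → ℂ), ∀ ε > (0 : ℝ), ∃ δ > (0 : ℝ),
      ∀ w : Projectivization ℂ (Fin (n + 1) → ℂ), pdist z w < δ →
        ∀ m : ℤ, pdist (projAct (Matrix.SpecialLinearGroup.toGL A ^ m) z)
          (projAct (Matrix.SpecialLinearGroup.toGL A ^ m) w) < ε) :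
    IsDiagonalizable (A : Matrix (Fin (n + 1)) (Fin (n + 1)) ℂ) := by
  by_contra hnd
  have hH : ¬ ∀ (μ : ℂ) (x : Fin (n+1) → ℂ),
      (Matrix.toLin' (↑A : Matrix (Fin (n+1)) (Fin (n+1)) ℂ) - μ • 1)
        ((Matrix.toLin' (↑A : Matrix (Fin (n+1)) (Fin (n+1)) ℂ) - μ • 1) x) = 0 →
      (Matrix.toLin' (↑A : Matrix (Fin (n+1)) (Fin (n+1)) ℂ) - μ • 1) x = 0 :=
    fun H => hnd (isDiag_of_forall _ H)
  push_neg at hH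
  obtain ⟨lam, w, hw2, hw1⟩ := hH
  set B := (↑A : Matrix (Fin (n+1)) (Fin (n+1)) ℂ) with hB
  have happ : ∀ x : Fin (n+1) → ℂ,
      (Matrix.toLin' B - lam • 1) x = B *ᵥ x - lam • x := by
    intro x
    simp [LinearMap.sub_apply, LinearMap.smul_apply, Module.End.one_apply, Matrix.toLin'_apply]
  set v : Fin (n+1) → ℂ := B *ᵥ w - lam • w with hvdef
  have hv0 : v ≠ 0 := by rw [hvdef, ← happ]; exact hw1
  have hv : B *ᵥ v = lam • v := by
    have h2 := hw2
    rw [happ, happ, ← hvdef] at h2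
    exact sub_eq_zero.1 h2
  have hw3 : B *ᵥ w = lam • w + v := by rw [hvdef]; module
  have hAunit : IsUnit B := by
    rw [hB, Matrix.isUnit_iff_isUnit_det, Matrix.SpecialLinearGroup.det_coe]
    exact isUnit_one
  have hBv : B *ᵥ v ≠ 0 := by
    have := mulVec_unit_ne (Matrix.SpecialLinearGroup.toGL A) hv0
    exact this
  have hlam0 : lam ≠ 0 := by
    rintro rfl
    apply hBv
    rw [hv, zero_smul]
  have hw0 : w ≠ 0 := by
    intro hzz
    apply hv0
    rw [hvdef, hzz]
    simp
  have hind : ∀ a b : ℂ, a • v + b • w = 0 → a = 0 ∧ b = 0 := by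
    intro a b hab
    have h2 : B *ᵥ (a • v + b • w) - lam • (a • v + b • w) = 0 := by
      rw [hab]
      simp
    rw [Matrix.mulVec_add, Matrix.mulVec_smul, Matrix.mulVec_smul, hv, hw3] at h2
    have h3 : b • v = 0 := by
      linear_combination (norm := module) h2
    have hb : b = 0 := (smul_eq_zero.1 h3).resolve_right hv0
    refine ⟨?_, hb⟩
    rw [hb, zero_smul, add_zero] at hab
    exact (smul_eq_zero.1 hab).resolve_right hv0
  have hvE : toE v ≠ 0 := fun hh => hv0 (toE_eq_zero.1 hh)
  have hwE : toE w ≠ 0 := fun hh => hw0 (toE_eq_zero.1 hh)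
  have hdep : ∀ c : ℂ, toE w ≠ c • toE v := by
    intro c hc
    have hcw : w = c • v := by
      rw [← toE_smul] at hc
      exact (WithLp.equiv 2 (Fin (n+1) → ℂ)).symm.injective hc
    have := hind c (-1) (by rw [hcw]; module)
    simpa using this.2
  set d0 := pd (toE v) (toE w) with hd0def
  have hd0 : 0 < d0 := pd_pos hvE hwE hdep
  obtain ⟨δ, hδ, hh⟩ := h (Projectivization.mk ℂ v hv0) d0 hd0
  have htk : Tendsto (fun k : ℕ => -lam / ((k : ℂ) + 1)) atTop (𝓝 0) := by
    rw [tendsto_zero_iff_norm_tendsto_zero]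
    have h6 : ∀ k : ℕ, ‖-lam / ((k : ℂ) + 1)‖ = ‖lam‖ / ((k : ℝ) + 1) := by
      intro k
      rw [norm_div, norm_neg]
      congr 1
      rw [show ((k : ℂ) + 1) = ((k + 1 : ℕ) : ℂ) by push_cast; ring, Complex.norm_natCast]
      push_cast
      ring
    have h7 : Tendsto (fun k : ℕ => ‖lam‖ / ((k : ℝ) + 1)) atTop (𝓝 0) := by
      have h8 := (tendsto_const_div_atTop_nhds_zero_nat ‖lam‖).comp (tendsto_add_atTop_nat 1)
      have h9 : ((fun n : ℕ => ‖lam‖ / (n : ℝ)) ∘ (fun k : ℕ => k + 1))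
          = fun k : ℕ => ‖lam‖ / ((k : ℝ) + 1) := by
        funext k
        simp only [Function.comp]
        push_cast
        ring
      rwa [h9] at h8
    have h10 : (fun k : ℕ => ‖-lam / ((k : ℂ) + 1)‖)
        = fun k : ℕ => ‖lam‖ / ((k : ℝ) + 1) := funext h6
    rw [h10]
    exact h7
  have hlim1 : Tendsto (fun s : ℂ => pd (toE v) (toE (v + s • w))) (𝓝 0) (𝓝 0) := by
    have hmap : Tendsto (fun s : ℂ => toE v + s • toE w) (𝓝 0) (𝓝 (toE v)) := by
      have hcont : Continuous (fun s : ℂ => toE v + s • toE w) :=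
        continuous_const.add (continuous_id.smul continuous_const)
      simpa using hcont.tendsto 0
    have hcomp := (pd_continuousAt hvE hvE).tendsto.comp hmap
    rw [pd_self _ hvE] at hcomp
    have hfun : (fun s : ℂ => pd (toE v) (toE (v + s • w)))
        = (fun y => pd (toE v) y) ∘ (fun s : ℂ => toE v + s • toE w) :=
      funext fun s => by simp [Function.comp, toE_add, toE_smul]
    rw [hfun]
    exact hcomp
  have hev := (hlim1.comp htk).eventually (gt_mem_nhds hδ)
  obtain ⟨k, hk⟩ := hev.exists
  set t : ℂ := -lam / ((k : ℂ) + 1) with ht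
  have ht0 : t ≠ 0 :=
    div_ne_zero (neg_ne_zero.2 hlam0) (Nat.cast_add_one_ne_zero k)
  have hvtw : v + t • w ≠ 0 := by
    intro hzz
    have := hind 1 t (by rw [← hzz]; module)
    exact one_ne_zero this.1
  have hk' : pd (toE v) (toE (v + t • w)) < δ := hk
  have hy := hh (Projectivization.mk ℂ (v + t • w) hvtw)
    (by rw [pdist_mk hv0 hvtw]; exact hk') (((k + 1 : ℕ) : ℤ))
  have hcoe : (↑(Matrix.SpecialLinearGroup.toGL A ^ ((k + 1 : ℕ) : ℤ))
      : Matrix (Fin (n+1)) (Fin (n+1)) ℂ) = B ^ (k + 1) :=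
    coe_units_pow_nat _ (k + 1)
  have e1 : B ^ (k + 1) *ᵥ v = lam ^ (k + 1) • v := pow_mulVec_eigen hv (k + 1)
  have e2 : B ^ (k + 1) *ᵥ (v + t • w) = (t * lam ^ (k + 1)) • w := by
    rw [Matrix.mulVec_add, pow_mulVec_eigen hv (k + 1), Matrix.mulVec_smul, jordan_pow hv hw3 k]
    have hcoefzero : lam ^ (k + 1) + t * (((k : ℂ) + 1) * lam ^ k) = 0 := by
      rw [ht]
      have hk1 : ((k : ℂ) + 1) ≠ 0 := Nat.cast_add_one_ne_zero k
      have hstep : (-lam / ((k : ℂ) + 1)) * (((k : ℂ) + 1) * lam ^ k) = -lam * lam ^ k := by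
        rw [div_mul_eq_mul_div, mul_div_assoc]
        rw [mul_comm ((k : ℂ) + 1) (lam ^ k), mul_div_assoc, div_self hk1, mul_one]
      rw [hstep, pow_succ]
      ring
    have hsplit : lam ^ (k + 1) • v + t • (lam ^ (k + 1) • w + (((k : ℂ) + 1) * lam ^ k) • v)
        = (lam ^ (k + 1) + t * (((k : ℂ) + 1) * lam ^ k)) • v + (t * lam ^ (k + 1)) • w := by
      module
    rw [hsplit, hcoefzero, zero_smul, zero_add]
  have hmk1 : Projectivization.mk ℂ
      ((↑(Matrix.SpecialLinearGroup.toGL A ^ ((k + 1 : ℕ) : ℤ))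
        : Matrix (Fin (n+1)) (Fin (n+1)) ℂ) *ᵥ v)
      (mulVec_unit_ne _ hv0) = Projectivization.mk ℂ v hv0 := by
    rw [Projectivization.mk_eq_mk_iff]
    refine ⟨Units.mk0 (lam ^ (k + 1)) (pow_ne_zero _ hlam0), ?_⟩
    rw [Units.smul_def, Units.val_mk0, hcoe, e1]
  have hmk2 : Projectivization.mk ℂ
      ((↑(Matrix.SpecialLinearGroup.toGL A ^ ((k + 1 : ℕ) : ℤ))
        : Matrix (Fin (n+1)) (Fin (n+1)) ℂ) *ᵥ (v + t • w))
      (mulVec_unit_ne _ hvtw) = Projectivization.mk ℂ w hw0 := by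
    rw [Projectivization.mk_eq_mk_iff]
    refine ⟨Units.mk0 (t * lam ^ (k + 1)) (mul_ne_zero ht0 (pow_ne_zero _ hlam0)), ?_⟩
    rw [Units.smul_def, Units.val_mk0, hcoe, e2]
  rw [projAct_mk, projAct_mk, hmk1, hmk2, pdist_mk hv0 hw0] at hy
  exact absurd hy (lt_irrefl d0)

end St2

/-- For `γ̃ ∈ SL(n+1,ℂ)` with induced projective map `γ`, the family
`{γᵐ : m ∈ ℤ}` is equicontinuous at every point of `ℙⁿ` (w.r.t. the canonical uniform
structure, here expressed by the compatible metric `pdist`) iff `γ̃` is diagonalizable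
with all eigenvalues of modulus 1. -/
theorem stmt2 {n : ℕ} (A : Matrix.SpecialLinearGroup (Fin (n + 1)) ℂ) :
    (∀ z : Projectivization ℂ (Fin (n + 1) → ℂ), ∀ ε > (0 : ℝ), ∃ δ > (0 : ℝ),
      ∀ w : Projectivization ℂ (Fin (n + 1) → ℂ), pdist z w < δ →
        ∀ m : ℤ, pdist (projAct (Matrix.SpecialLinearGroup.toGL A ^ m) z)
          (projAct (Matrix.SpecialLinearGroup.toGL A ^ m) w) < ε) ↔
    (IsDiagonalizable (A : Matrix (Fin (n + 1)) (Fin (n + 1)) ℂ) ∧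
      ∀ μ ∈ spectrum ℂ (A : Matrix (Fin (n + 1)) (Fin (n + 1)) ℂ), ‖μ‖ = 1) := by
  constructor
  · intro h
    exact ⟨St2.forward_diag A h, St2.forward_spec A h⟩
  · rintro ⟨h1, h2⟩
    exact St2.backward A h1 h2
end
end

section
/- Let γ̃ ∈ GL(n+1,ℂ) and let γ = [[γ̃]] be the induced projective transformation of ℙⁿ. If there exists a nonempty open set W ⊆ ℙⁿ with W ≠ ℙⁿ and γ(closure(W)) ⊆ W, then the set Λ(⟨γ⟩) is nonempty and is not a connected subset of ℙⁿ. -/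
open Filter Topology Matrix

noncomputable section

variable {n : ℕ}

lemma pmap_congr {f g : (Fin n → ℂ) →ₗ[ℂ] (Fin n → ℂ)} (hf : Function.Injective f)
    (h : f = g) : Projectivization.map f hf =
      Projectivization.map g (h ▸ hf) := by subst h; rfl

lemma projAct_mul (B C : GL (Fin n) ℂ) : projAct (B * C) = projAct B ∘ projAct C := by
  unfold projAct
  rw [pmap_congr _ (show ((LinearMap.GeneralLinearGroup.toLinearEquiv
      (Matrix.GeneralLinearGroup.toLin (B * C))).toLinearMap : (Fin n → ℂ) →ₗ[ℂ] (Fin n → ℂ)) =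
    (LinearMap.GeneralLinearGroup.toLinearEquiv (Matrix.GeneralLinearGroup.toLin B)).toLinearMap
      ∘ₗ (LinearMap.GeneralLinearGroup.toLinearEquiv
        (Matrix.GeneralLinearGroup.toLin C)).toLinearMap from by
    refine LinearMap.ext fun v => ?_
    simp [LinearMap.GeneralLinearGroup.toLinearEquiv, Matrix.mulVec_mulVec]),
    Projectivization.map_comp]

lemma projAct_one : projAct (1 : GL (Fin n) ℂ) = id := by
  unfold projAct
  rw [pmap_congr _ (show ((LinearMap.GeneralLinearGroup.toLinearEquiv
      (Matrix.GeneralLinearGroup.toLin (1 : GL (Fin n) ℂ))).toLinearMap :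
        (Fin n → ℂ) →ₗ[ℂ] (Fin n → ℂ)) = LinearMap.id from by
    refine LinearMap.ext fun v => ?_
    simp [LinearMap.GeneralLinearGroup.toLinearEquiv]),
    Projectivization.map_id]

lemma continuous_projAct (B : GL (Fin n) ℂ) : Continuous (projAct B) := by
  unfold projAct Projectivization.map
  exact Continuous.quotient_map'
    (by fun_prop) _

def projHomeo (B : GL (Fin n) ℂ) :
    Projectivization ℂ (Fin n → ℂ) ≃ₜ Projectivization ℂ (Fin n → ℂ) where
  toFun := projAct B
  invFun := projAct B⁻¹
  left_inv x := by
    have : projAct (B⁻¹ * B) x = projAct B⁻¹ (projAct B x) := by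
      rw [projAct_mul]; rfl
    simpa [projAct_one] using this.symm
  right_inv x := by
    have : projAct (B * B⁻¹) x = projAct B (projAct B⁻¹ x) := by
      rw [projAct_mul]; rfl
    simpa [projAct_one] using this.symm
  continuous_toFun := continuous_projAct B
  continuous_invFun := continuous_projAct B⁻¹

abbrev PS (n : ℕ) := Projectivization ℂ (Fin n → ℂ)

lemma continuous_mk {m : ℕ} :
    Continuous fun v : {w : Fin m → ℂ // w ≠ 0} => Projectivization.mk' ℂ v :=
  continuous_quotient_mk'

lemma exists_subseq {m : ℕ} (q : ℕ → PS (m + 1)) :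
    ∃ p : PS (m + 1), ∃ φ : ℕ → ℕ, StrictMono φ ∧
      Tendsto (fun i => q (φ i)) atTop (𝓝 p) := by
  classical
  set E := (Fin (m + 1) → ℂ)
  have hrepne : ∀ i, (q i).rep ≠ 0 := fun i => (q i).rep_nonzero
  set u : ℕ → E := fun i => (‖(q i).rep‖ : ℂ)⁻¹ • (q i).rep with hu
  have hnorm : ∀ i, ‖u i‖ = 1 := by
    intro i
    rw [hu]
    simp [norm_smul, norm_ne_zero_iff.2 (hrepne i)]
  have hune : ∀ i, u i ≠ 0 := fun i => by
    intro h0; have := hnorm i; rw [h0] at this; simp at this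
  have hmk : ∀ i, Projectivization.mk ℂ (u i) (hune i) = q i := by
    intro i
    conv_rhs => rw [← (q i).mk_rep]
    rw [Projectivization.mk_eq_mk_iff]
    exact ⟨Units.mk0 (‖(q i).rep‖⁻¹ : ℂ) (by simp [norm_ne_zero_iff.2 (hrepne i)]), rfl⟩
  have hmem : ∀ i, u i ∈ Metric.sphere (0 : E) 1 := by
    intro i; simp [hnorm i]
  obtain ⟨a, ha, φ, hφ, hconv⟩ :=
    (isCompact_sphere (0 : E) 1).tendsto_subseq hmem
  have hane : a ≠ 0 := by
    intro h0; rw [h0] at ha; simp at ha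
  refine ⟨Projectivization.mk ℂ a hane, φ, hφ, ?_⟩
  have : Tendsto (fun i => (⟨u (φ i), hune _⟩ : {w : E // w ≠ 0})) atTop
      (𝓝 ⟨a, hane⟩) := by
    rw [tendsto_subtype_rng]
    exact hconv
  have := (continuous_mk.tendsto _).comp this
  simp only [← hmk]
  exact this

lemma projAct_zpow_add (B : GL (Fin n) ℂ) (a b : ℤ) (x : PS n) :
    projAct (B ^ (a + b)) x = projAct (B ^ a) (projAct (B ^ b) x) := by
  rw [_root_.zpow_add, projAct_mul]; rfl

lemma projAct_zpow_zero (B : GL (Fin n) ℂ) (x : PS n) : projAct (B ^ (0 : ℤ)) x = x := by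
  rw [zpow_zero, projAct_one]; rfl

lemma projAct_cancel (B : GL (Fin n) ℂ) (x : PS n) : projAct B⁻¹ (projAct B x) = x :=
  (projHomeo B).left_inv x

lemma projAct_cancel' (B : GL (Fin n) ℂ) (x : PS n) : projAct B (projAct B⁻¹ x) = x :=
  (projHomeo B).right_inv x

lemma projAct_zpow_cancel (B : GL (Fin n) ℂ) (t : ℤ) (x : PS n) :
    projAct (B⁻¹ ^ t) (projAct (B ^ t) x) = x := by
  rw [_root_.inv_zpow]; exact projAct_cancel _ x

lemma projAct_zpow_cancel' (B : GL (Fin n) ℂ) (t : ℤ) (x : PS n) :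
    projAct (B ^ t) (projAct (B⁻¹ ^ t) x) = x := by
  rw [_root_.inv_zpow]; exact projAct_cancel' _ x

lemma isClosed_projAct_image (B : GL (Fin n) ℂ) {C : Set (PS n)} (hC : IsClosed C) :
    IsClosed (projAct B '' C) :=
  (projHomeo B).isClosedMap _ hC

lemma invar (B : GL (Fin n) ℂ) {U : Set (PS n)}
    (hBU : projAct B '' closure U ⊆ U) :
    ∀ (k : ℕ), ∀ x ∈ closure U, projAct (B ^ (k : ℤ)) x ∈ closure U := by
  intro k
  induction k with
  | zero => intro x hx; rwa [Nat.cast_zero, projAct_zpow_zero]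
  | succ k ih =>
    intro x hx
    have : ((k + 1 : ℕ) : ℤ) = 1 + (k : ℤ) := by push_cast; ring
    rw [this, projAct_zpow_add]
    refine subset_closure (hBU ⟨_, ih x hx, ?_⟩)
    rw [zpow_one]

lemma core_pos (B : GL (Fin n) ℂ) {U : Set (PS n)}
    (hBU : projAct B '' closure U ⊆ U) {z p : PS n} {ψ : ℕ → ℕ}
    (hψ : Tendsto ψ atTop atTop)
    (hconv : Tendsto (fun i => projAct (B ^ (ψ i : ℤ)) z) atTop (𝓝 p))
    (M : ℕ) (hM : projAct (B ^ (M : ℤ)) z ∈ U) :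
    ∀ k : ℕ, p ∈ projAct (B ^ ((k : ℤ) + 1)) '' closure U := by
  intro k
  refine (isClosed_projAct_image _ isClosed_closure).mem_of_tendsto hconv ?_
  filter_upwards [hψ.eventually_ge_atTop (M + k + 1)] with i hi
  have hdec : (ψ i : ℤ) = ((k : ℤ) + 1) + (((ψ i - (M + k + 1) : ℕ) : ℤ) + (M : ℤ)) := by
    have := Nat.cast_sub hi (R := ℤ)
    push_cast at this ⊢
    omega
  rw [hdec, projAct_zpow_add B ((k : ℤ) + 1), projAct_zpow_add B ((ψ i - (M + k + 1) : ℕ) : ℤ) (M : ℤ)]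
  exact ⟨_, invar B hBU _ _ (subset_closure hM), rfl⟩

lemma core_neg (B : GL (Fin n) ℂ) {U : Set (PS n)}
    (hBU : projAct B '' closure U ⊆ U) {z p : PS n} {ψ : ℕ → ℕ}
    (hψ : Tendsto ψ atTop atTop)
    (hconv : Tendsto (fun i => projAct (B ^ (ψ i : ℤ)) z) atTop (𝓝 p))
    (hnever : ∀ M : ℕ, projAct (B ^ (M : ℤ)) z ∉ U) :
    ∀ k : ℕ, projAct (B ^ (k : ℤ)) p ∈ closure (closure U)ᶜ := by
  have hV : ∀ M : ℕ, projAct (B ^ (M : ℤ)) z ∈ (closure U)ᶜ := by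
    intro M hmem
    refine hnever (M + 1) ?_
    have : ((M + 1 : ℕ) : ℤ) = 1 + (M : ℤ) := by push_cast; ring
    rw [this, projAct_zpow_add]
    refine hBU ⟨_, hmem, ?_⟩
    rw [zpow_one]
  intro k
  have htend : Tendsto (fun i => projAct (B ^ ((k : ℤ) + (ψ i : ℤ))) z) atTop
      (𝓝 (projAct (B ^ (k : ℤ)) p)) := by
    have := ((continuous_projAct (B ^ (k : ℤ))).tendsto p).comp hconv
    refine this.congr fun i => ?_
    simp only [Function.comp_apply]
    exact (projAct_zpow_add _ _ _ _).symm
  refine mem_closure_of_tendsto htend (Eventually.of_forall fun i => ?_)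
  have : (k : ℤ) + (ψ i : ℤ) = ((k + ψ i : ℕ) : ℤ) := by push_cast; ring
  rw [this]
  exact hV _

/-- `Λ(⟨γ⟩)`: the closure of the set of points `p ∈ ℙⁿ` for which there exist `z ∈ ℙⁿ`
and a sequence of integers `(m i)` with `|m i| → ∞` and `γ^(m i) z → p`. -/
def LambdaSet {n : ℕ} (A : GL (Fin (n + 1)) ℂ) : Set (Projectivization ℂ (Fin (n + 1) → ℂ)) :=
  closure {p | ∃ z : Projectivization ℂ (Fin (n + 1) → ℂ), ∃ m : ℕ → ℤ,
    Tendsto (fun i => |m i|) atTop atTop ∧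
    Tendsto (fun i => projAct (A ^ m i) z) atTop (𝓝 p)}

/-- If for `γ = [[γ̃]]`, `γ̃ ∈ GL(n+1,ℂ)`, there is a nonempty proper
open set `W ⊆ ℙⁿ` with `γ(closure W) ⊆ W`, then `Λ(⟨γ⟩)` is nonempty and is not a
connected subset of `ℙⁿ`. -/
theorem stmt5 {n : ℕ} (A : GL (Fin (n + 1)) ℂ)
    (h : ∃ W : Set (Projectivization ℂ (Fin (n + 1) → ℂ)), W.Nonempty ∧ IsOpen W ∧
      W ≠ Set.univ ∧ projAct A '' closure W ⊆ W) :
    (LambdaSet A).Nonempty ∧ ¬ IsPreconnected (LambdaSet A) := by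
  classical
  obtain ⟨W, hWne, hWopen, hWproper, hmap⟩ := h
  set S : Set (PS (n + 1)) := {p | ∃ z : PS (n + 1), ∃ m : ℕ → ℤ,
    Tendsto (fun i => |m i|) atTop atTop ∧
    Tendsto (fun i => projAct (A ^ m i) z) atTop (𝓝 p)} with hS
  have hLam : LambdaSet A = closure S := rfl
  set V : Set (PS (n + 1)) := (closure W)ᶜ with hV
  have hVopen : IsOpen V := isClosed_closure.isOpen_compl
  -- V is nonempty
  have hVne : V.Nonempty := by
    rw [Set.nonempty_compl]
    intro hcl
    apply hWproper
    have hsurj : Function.Surjective (projAct A) := (projHomeo A).surjective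
    have : projAct A '' closure W = Set.univ := by
      rw [hcl, Set.image_univ, hsurj.range_eq]
    rw [this] at hmap
    exact Set.eq_univ_of_univ_subset hmap
  -- dual contraction for A⁻¹ and V
  have hmap' : projAct A⁻¹ '' closure V ⊆ V := by
    rintro x ⟨y, hy, rfl⟩
    have hyW : y ∈ Wᶜ := by
      have : closure V ⊆ Wᶜ := by
        rw [← hWopen.isClosed_compl.closure_eq]
        exact closure_mono (Set.compl_subset_compl.2 subset_closure)
      exact this hy
    intro hmem
    exact hyW (hmap ⟨projAct A⁻¹ y, hmem, projAct_cancel' A y⟩)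
  -- the attractor sets
  set K1 : Set (PS (n + 1)) := ⋂ k : ℕ, projAct (A ^ ((k : ℤ) + 1)) '' closure W with hK1
  set K2 : Set (PS (n + 1)) := ⋂ k : ℕ, projAct (A⁻¹ ^ ((k : ℤ) + 1)) '' closure V with hK2
  have hK1closed : IsClosed K1 :=
    isClosed_iInter fun k => isClosed_projAct_image _ isClosed_closure
  have hK2closed : IsClosed K2 :=
    isClosed_iInter fun k => isClosed_projAct_image _ isClosed_closure
  have hK1W : K1 ⊆ W := by
    intro x hx
    have := Set.mem_iInter.1 hx 0
    simp only [Nat.cast_zero, zero_add, zpow_one] at this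
    exact hmap this
  have hK2V : K2 ⊆ V := by
    intro x hx
    have := Set.mem_iInter.1 hx 0
    simp only [Nat.cast_zero, zero_add, zpow_one] at this
    exact hmap' this
  have hWV : W ∩ V = ∅ := by
    rw [Set.eq_empty_iff_forall_notMem]
    rintro x ⟨hxW, hxV⟩
    exact hxV (subset_closure hxW)
  -- S ⊆ K1 ∪ K2
  have hSsub : S ⊆ K1 ∪ K2 := by
    rintro p ⟨z, m, hm, hconv⟩
    by_cases hfreq : ∃ᶠ i in atTop, 0 ≤ m i
    · obtain ⟨φ, hφmono, hφ⟩ := Filter.extraction_of_frequently_atTop hfreq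
      set ψ : ℕ → ℕ := fun i => (m (φ i)).toNat with hψdef
      have hψ : Tendsto ψ atTop atTop := by
        rw [tendsto_atTop_atTop]
        intro b
        have := ((hm.comp hφmono.tendsto_atTop).eventually_ge_atTop (b : ℤ)).exists_forall_of_atTop
        obtain ⟨N, hN⟩ := this
        refine ⟨N, fun i hi => ?_⟩
        have h1 := hN i hi
        simp only [Function.comp_apply] at h1
        rw [abs_of_nonneg (hφ i)] at h1
        exact (Int.le_toNat (le_trans (Int.ofNat_nonneg b) h1)).2 h1
      have hconv' : Tendsto (fun i => projAct (A ^ ((ψ i : ℕ) : ℤ)) z) atTop (𝓝 p) := by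
        refine (hconv.comp hφmono.tendsto_atTop).congr fun i => ?_
        simp only [Function.comp_apply, hψdef, Int.toNat_of_nonneg (hφ i)]
      by_cases hM : ∃ M : ℕ, projAct (A ^ (M : ℤ)) z ∈ W
      · obtain ⟨M, hMmem⟩ := hM
        exact Or.inl (Set.mem_iInter.2 (core_pos A hmap hψ hconv' M hMmem))
      · push_neg at hM
        have h2 := core_neg A hmap hψ hconv' hM
        refine Or.inr (Set.mem_iInter.2 fun k => ?_)
        refine ⟨projAct (A ^ ((k : ℤ) + 1)) p, ?_, projAct_zpow_cancel A _ p⟩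
        have := h2 (k + 1)
        rwa [show ((k + 1 : ℕ) : ℤ) = (k : ℤ) + 1 by push_cast; ring] at this
    · have hfreq' : ∃ᶠ i in atTop, m i ≤ 0 := by
        rw [Filter.not_frequently] at hfreq
        exact (hfreq.mono fun i hi => le_of_not_ge hi).frequently
      obtain ⟨φ, hφmono, hφ⟩ := Filter.extraction_of_frequently_atTop hfreq'
      set ψ : ℕ → ℕ := fun i => (-(m (φ i))).toNat with hψdef
      have hψ : Tendsto ψ atTop atTop := by
        rw [tendsto_atTop_atTop]
        intro b
        obtain ⟨N, hN⟩ :=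
          ((hm.comp hφmono.tendsto_atTop).eventually_ge_atTop (b : ℤ)).exists_forall_of_atTop
        refine ⟨N, fun i hi => ?_⟩
        have h1 := hN i hi
        simp only [Function.comp_apply] at h1
        rw [abs_of_nonpos (hφ i)] at h1
        exact (Int.le_toNat (le_trans (Int.ofNat_nonneg b) h1)).2 h1
      have hconv' : Tendsto (fun i => projAct (A⁻¹ ^ ((ψ i : ℕ) : ℤ)) z) atTop (𝓝 p) := by
        refine (hconv.comp hφmono.tendsto_atTop).congr fun i => ?_
        simp only [Function.comp_apply, hψdef]
        congr 1
        rw [_root_.inv_zpow, ← _root_.zpow_neg]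
        congr 1
        rw [Int.toNat_of_nonneg (neg_nonneg.2 (hφ i)), neg_neg]
      by_cases hM : ∃ M : ℕ, projAct (A⁻¹ ^ (M : ℤ)) z ∈ V
      · obtain ⟨M, hMmem⟩ := hM
        exact Or.inr (Set.mem_iInter.2 (core_pos A⁻¹ hmap' hψ hconv' M hMmem))
      · push_neg at hM
        have h2 := core_neg A⁻¹ hmap' hψ hconv' hM
        have hsubW : closure (closure V)ᶜ ⊆ closure W := by
          refine closure_minimal ?_ isClosed_closure
          intro x hx
          by_contra hxV
          exact hx (subset_closure hxV)
        refine Or.inl (Set.mem_iInter.2 fun k => ?_)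
        refine ⟨projAct (A⁻¹ ^ ((k : ℤ) + 1)) p, ?_, projAct_zpow_cancel' A _ p⟩
        have := hsubW (h2 (k + 1))
        rwa [show ((k + 1 : ℕ) : ℤ) = (k : ℤ) + 1 by push_cast; ring] at this
  -- construct a limit point in W
  have hpW : ∃ p ∈ S, p ∈ W := by
    obtain ⟨z, hz⟩ := hWne
    obtain ⟨p, φ, hφmono, hconv⟩ := exists_subseq (fun i => projAct (A ^ (i : ℤ)) z)
    have hψ : Tendsto φ atTop atTop := hφmono.tendsto_atTop
    refine ⟨p, ⟨z, fun i => (φ i : ℤ), ?_, hconv⟩, ?_⟩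
    · have : Tendsto (fun i => ((φ i : ℕ) : ℤ)) atTop atTop :=
        tendsto_natCast_atTop_atTop.comp hψ
      exact this.congr fun i => by simp
    · refine hK1W (Set.mem_iInter.2 (core_pos A hmap hψ hconv 0 ?_))
      rwa [Nat.cast_zero, projAct_zpow_zero]
  -- construct a limit point in V
  have hpV : ∃ p ∈ S, p ∈ V := by
    obtain ⟨z, hz⟩ := hVne
    obtain ⟨p, φ, hφmono, hconv⟩ := exists_subseq (fun i => projAct (A⁻¹ ^ (i : ℤ)) z)
    have hψ : Tendsto φ atTop atTop := hφmono.tendsto_atTop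
    refine ⟨p, ⟨z, fun i => -(φ i : ℤ), ?_, ?_⟩, ?_⟩
    · have : Tendsto (fun i => ((φ i : ℕ) : ℤ)) atTop atTop :=
        tendsto_natCast_atTop_atTop.comp hψ
      exact this.congr fun i => by simp
    · refine hconv.congr fun i => ?_
      congr 1
      rw [_root_.zpow_neg, ← _root_.inv_zpow]
    · refine hK2V (Set.mem_iInter.2 (core_pos A⁻¹ hmap' hψ hconv 0 ?_))
      rwa [Nat.cast_zero, projAct_zpow_zero]
  obtain ⟨p₁, hp₁S, hp₁W⟩ := hpW
  obtain ⟨p₂, hp₂S, hp₂V⟩ := hpV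
  have hLamsub : LambdaSet A ⊆ W ∪ V := by
    rw [hLam]
    exact (closure_minimal hSsub (hK1closed.union hK2closed)).trans
      (Set.union_subset_union hK1W hK2V)
  refine ⟨⟨p₁, subset_closure hp₁S⟩, fun hpre => ?_⟩
  obtain ⟨x, hx⟩ := hpre W V hWopen hVopen hLamsub
    ⟨p₁, subset_closure hp₁S, hp₁W⟩ ⟨p₂, subset_closure hp₂S, hp₂V⟩
  rw [hWV, Set.inter_empty] at hx
  exact hx
end
end

section
/- Let T ∈ GL(n+1,ℂ) have characteristic polynomial ∏_{j=1}^{n+1} (X − α_j), let p ∈ ℂ^{n+1} \ {0} satisfy T p = α₁ p, and suppose |α₁| = max{ |α_j| : 1 ≤ j ≤ n+1 } and |α₁| ≠ |α_k| for every k ≥ 2. Then [p] is an attracting fixed point of [[T]] acting on ℙⁿ: [[T]][p] = [p] and there is an open neighborhood U of [p] in ℙⁿ such that for every q ∈ U, the sequence [[T]]ᵐ q converges to [p] as m → ∞. -/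
open Filter Topology Matrix Polynomial

noncomputable section

namespace Stmt6Aux

variable {K V : Type*} [Field K] [AddCommGroup V] [Module K V]

lemma restrict_pow_apply (f : V →ₗ[K] V) {W : Submodule K V} (h : ∀ x ∈ W, f x ∈ W)
    (m : ℕ) (x : W) : (((f.restrict h) ^ m) x : V) = (f ^ m) (x : V) := by
  induction m with
  | zero => simp
  | succ m ih =>
    rw [pow_succ', pow_succ', Module.End.mul_apply, Module.End.mul_apply,
      LinearMap.restrict_coe_apply, ih]

lemma charpoly_eq_mul [FiniteDimensional K V] (f : Module.End K V) {E W : Submodule K V}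
    (h : IsCompl E W) (hE : ∀ x ∈ E, f x ∈ E) (hW : ∀ x ∈ W, f x ∈ W) :
    f.charpoly = (f.restrict hE).charpoly * (f.restrict hW).charpoly := by
  let e := Submodule.prodEquivOfIsCompl E W h
  have hψ : (f.restrict hE).prodMap (f.restrict hW) = e.symm.conj f := by
    apply LinearMap.ext
    intro x
    apply e.injective
    rw [LinearEquiv.conj_apply]
    simp only [LinearMap.coe_comp, LinearEquiv.coe_coe, Function.comp_apply,
      LinearEquiv.apply_symm_apply, LinearEquiv.symm_symm]
    rcases x with ⟨x₁, x₂⟩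
    simp only [LinearMap.prodMap_apply, Prod.map]
    rw [Submodule.coe_prodEquivOfIsCompl', Submodule.coe_prodEquivOfIsCompl']
    simp [LinearMap.restrict_coe_apply]
  rw [← e.symm.charpoly_conj f, ← hψ, LinearMap.charpoly_prodMap]

lemma charpoly_smul_one [FiniteDimensional K V] (μ : K) :
    (μ • (1 : Module.End K V)).charpoly = (X - C μ) ^ (Module.finrank K V) := by
  classical
  let b := Module.Free.chooseBasis K V
  rw [← LinearMap.charpoly_toMatrix (μ • (1 : Module.End K V)) b]
  have hmat : LinearMap.toMatrix b b (μ • (1 : Module.End K V))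
      = Matrix.diagonal (fun _ => μ) := by
    rw [_root_.map_smul, LinearMap.toMatrix_one]
    ext i j
    by_cases hij : i = j <;>
      simp [Matrix.smul_apply, Matrix.one_apply, Matrix.diagonal_apply, hij]
  rw [hmat, Matrix.charpoly]
  have h3 : charmatrix (Matrix.diagonal (fun _ : Module.Free.ChooseBasisIndex K V => μ))
      = Matrix.diagonal (fun _ => (X : K[X]) - C μ) := by
    unfold charmatrix
    rw [RingHom.mapMatrix_apply, Matrix.diagonal_map (map_zero _), Matrix.scalar_apply,
      Matrix.diagonal_sub]
  rw [h3, Matrix.det_diagonal, Finset.prod_const, Finset.card_univ,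
    Module.finrank_eq_card_chooseBasisIndex]

end Stmt6Aux

set_option maxHeartbeats 2000000 in
/-- `[p]` is an attracting fixed point of `[[T]]` on `ℙⁿ`. -/
theorem stmt6 {n : ℕ} (T : GL (Fin (n + 1)) ℂ) (α : Fin (n + 1) → ℂ)
    (hchar : (T : Matrix (Fin (n + 1)) (Fin (n + 1)) ℂ).charpoly = ∏ j, (X - C (α j)))
    (p : Fin (n + 1) → ℂ) (hp : p ≠ 0)
    (hTp : (T : Matrix (Fin (n + 1)) (Fin (n + 1)) ℂ).mulVec p = α 0 • p)
    (hmax : ∀ j, ‖α j‖ ≤ ‖α 0‖)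
    (hne : ∀ j, j ≠ 0 → ‖α j‖ ≠ ‖α 0‖) :
    projAct T (Projectivization.mk ℂ p hp) = Projectivization.mk ℂ p hp ∧
    ∃ U : Set (Projectivization ℂ (Fin (n + 1) → ℂ)), IsOpen U ∧
      Projectivization.mk ℂ p hp ∈ U ∧
      ∀ q ∈ U, Tendsto (fun m : ℕ => projAct (T ^ m) q) atTop
        (𝓝 (Projectivization.mk ℂ p hp)) := by
  classical
  -- generic facts about the action of `GL` on vectors
  have hGL : ∀ (A : GL (Fin (n + 1)) ℂ) (v : Fin (n + 1) → ℂ),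
      (A : Matrix (Fin (n + 1)) (Fin (n + 1)) ℂ).mulVec v
        = (LinearMap.GeneralLinearGroup.toLinearEquiv (Matrix.GeneralLinearGroup.toLin A)) v := by
    intro A v
    rfl
  have hinj : ∀ (A : GL (Fin (n + 1)) ℂ), Function.Injective
      (fun v : Fin (n + 1) → ℂ => (A : Matrix (Fin (n + 1)) (Fin (n + 1)) ℂ).mulVec v) := by
    intro A a b hab
    apply (LinearMap.GeneralLinearGroup.toLinearEquiv (Matrix.GeneralLinearGroup.toLin A)).injective
    rw [← hGL, ← hGL]
    exact hab
  have hne0 : ∀ (A : GL (Fin (n + 1)) ℂ) (v : Fin (n + 1) → ℂ), v ≠ 0 →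
      (A : Matrix (Fin (n + 1)) (Fin (n + 1)) ℂ).mulVec v ≠ 0 := by
    intro A v hv h
    apply hv
    apply hinj A
    show (A : Matrix (Fin (n + 1)) (Fin (n + 1)) ℂ).mulVec v
      = (A : Matrix (Fin (n + 1)) (Fin (n + 1)) ℂ).mulVec 0
    rw [h, Matrix.mulVec_zero]
  have hproj : ∀ (A : GL (Fin (n + 1)) ℂ) (v : Fin (n + 1) → ℂ) (hv : v ≠ 0),
      projAct A (Projectivization.mk ℂ v hv)
        = Projectivization.mk ℂ ((A : Matrix (Fin (n + 1)) (Fin (n + 1)) ℂ).mulVec v)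
          (hne0 A v hv) := by
    intro A v hv
    show Projectivization.map _ _ _ = _
    rw [Projectivization.map_mk, Projectivization.mk_eq_mk_iff]
    refine ⟨1, ?_⟩
    rw [one_smul, hGL]
    rfl
  -- the endomorphism `f`
  set M : Matrix (Fin (n + 1)) (Fin (n + 1)) ℂ := (T : Matrix (Fin (n + 1)) (Fin (n + 1)) ℂ)
    with hMdef
  set f : Module.End ℂ (Fin (n + 1) → ℂ) := M.mulVecLin with hfdef
  have hfapp : ∀ v, f v = M.mulVec v := fun v => Matrix.mulVecLin_apply M v
  have hα0 : α 0 ≠ 0 := by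
    intro h
    apply hp
    apply hinj T
    show M.mulVec p = M.mulVec 0
    rw [Matrix.mulVec_zero, hTp, h, zero_smul]
  have hfp : f p = α 0 • p := by rw [hfapp, hTp]
  have hfchar : f.charpoly = ∏ j, (X - C (α j)) := by
    have hTM : LinearMap.toMatrix (Pi.basisFun ℂ (Fin (n + 1))) (Pi.basisFun ℂ (Fin (n + 1))) f
        = M := by
      rw [LinearMap.toMatrix_eq_toMatrix', hfdef, ← Matrix.toLin'_apply', LinearMap.toMatrix'_toLin']
    rw [← LinearMap.charpoly_toMatrix f (Pi.basisFun ℂ (Fin (n + 1))), hTM]; exact hchar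
  have hα_ne : ∀ j : Fin (n + 1), j ≠ 0 → α j ≠ α 0 := fun j hj h => hne j hj (by rw [h])
  -- the polynomial `g0` collecting the other eigenvalues
  set g0 : Polynomial ℂ := ∏ j ∈ Finset.univ.erase (0 : Fin (n + 1)), (X - C (α j)) with hg0def
  have hsplit : (∏ j, (X - C (α j))) = (X - C (α 0)) * g0 :=
    (Finset.mul_prod_erase Finset.univ _ (Finset.mem_univ 0)).symm
  have hg0 : g0.eval (α 0) ≠ 0 := by
    rw [hg0def, Polynomial.eval_prod]
    rw [Finset.prod_ne_zero_iff]
    intro j hj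
    rw [Polynomial.eval_sub, Polynomial.eval_X, Polynomial.eval_C, sub_ne_zero]
    exact fun h => hα_ne j (Finset.mem_erase.mp hj).1 h.symm
  -- eigenvalues are among the `α j`
  have heval : ∀ μ : ℂ, f.HasEigenvalue μ → ∃ j, μ = α j := by
    intro μ hμ
    have h1 : (minpoly ℂ f).IsRoot μ := Module.End.hasEigenvalue_iff_isRoot.mp hμ
    have h2 : (f.charpoly).IsRoot μ := h1.dvd (LinearMap.minpoly_dvd_charpoly f)
    rw [hfchar] at h2
    have h3 : (∏ j, (X - C (α j))).eval μ = 0 := h2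
    rw [Polynomial.eval_prod, Finset.prod_eq_zero_iff] at h3
    obtain ⟨j, -, hj⟩ := h3
    rw [Polynomial.eval_sub, Polynomial.eval_X, Polynomial.eval_C, sub_eq_zero] at hj
    exact ⟨j, hj⟩
  -- the eigenspace decomposition
  set E : Submodule ℂ (Fin (n + 1) → ℂ) := f.maxGenEigenspace (α 0) with hEdef
  set Wsub : Submodule ℂ (Fin (n + 1) → ℂ) :=
    ⨆ (μ : ℂ) (_ : μ ≠ α 0), f.maxGenEigenspace μ with hWdef
  have hdisj : Disjoint E Wsub := (f.independent_maxGenEigenspace) (α 0)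
  have hsup : E ⊔ Wsub = ⊤ := by
    apply le_antisymm le_top
    rw [← Module.End.iSup_maxGenEigenspace_eq_top f]
    apply iSup_le
    intro μ
    by_cases h : μ = α 0
    · subst h; exact le_sup_left
    · exact le_trans (le_iSup₂ (f := fun μ _ => f.maxGenEigenspace μ) μ h) le_sup_right
  have hcompl : IsCompl E Wsub := ⟨hdisj, codisjoint_iff.mpr hsup⟩
  have hEinv : ∀ x ∈ E, f x ∈ E := fun x hx =>
    Module.End.mapsTo_maxGenEigenspace_of_comm (Commute.refl f) (α 0) hx
  have hWinv : ∀ x ∈ Wsub, f x ∈ Wsub := by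
    have hmap : Submodule.map f Wsub ≤ Wsub := by
      rw [hWdef, Submodule.map_iSup]
      apply iSup_le
      intro μ
      rw [Submodule.map_iSup]
      apply iSup_le
      intro hμ
      refine le_trans ?_ (le_iSup₂ (f := fun μ _ => f.maxGenEigenspace μ) μ hμ)
      rintro x ⟨y, hy, rfl⟩
      exact Module.End.mapsTo_maxGenEigenspace_of_comm (Commute.refl f) μ hy
    intro x hx
    exact hmap ⟨x, hx, rfl⟩
  have hmemE : ∀ x : Fin (n + 1) → ℂ, f x = α 0 • x → x ∈ E := by
    intro x hx
    rw [hEdef, Module.End.mem_maxGenEigenspace]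
    exact ⟨1, by simp [pow_one, LinearMap.sub_apply, LinearMap.smul_apply, Module.End.one_apply,
      hx]⟩
  have hpE : p ∈ E := hmemE p hfp
  -- the key nilpotency-killing argument: on `E`, `f` acts as `α 0`
  have key : ∀ (k : ℕ) (x : Fin (n + 1) → ℂ),
      ((f - α 0 • 1) ^ k) x = 0 → (f - α 0 • 1) x = 0 := by
    intro k
    induction k with
    | zero => intro x hx; simp only [pow_zero, Module.End.one_apply] at hx; simp [hx]
    | succ k ih =>
      intro x hx
      have h1 : ((f - α 0 • 1) ^ k) ((f - α 0 • 1) x) = 0 := by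
        rw [← Module.End.mul_apply, ← pow_succ]
        exact hx
      have h2 : (f - α 0 • 1) ((f - α 0 • 1) x) = 0 := ih _ h1
      by_cases hy0 : (f - α 0 • 1) x = 0
      · exact hy0
      exfalso
      set y := (f - α 0 • 1) x with hydef
      have hfy : f y = α 0 • y := by
        rw [LinearMap.sub_apply, LinearMap.smul_apply, Module.End.one_apply, sub_eq_zero] at h2
        exact h2
      have hev : f.HasEigenvector (α 0) y := ⟨Module.End.mem_eigenspace_iff.mpr hfy, hy0⟩
      have hzero : (Polynomial.aeval f) (∏ j, (X - C (α j))) x = 0 := by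
        rw [← hfchar, f.aeval_self_charpoly]
        rfl
      have haev : (Polynomial.aeval f) (X - C (α 0)) = f - α 0 • 1 := by
        rw [map_sub, Polynomial.aeval_X, Polynomial.aeval_C,
          Module.algebraMap_end_eq_smul_id]
        rfl
      rw [hsplit, mul_comm, _root_.map_mul, haev, Module.End.mul_apply] at hzero
      have hzy : (Polynomial.aeval f) g0 y = 0 := hzero
      rw [Module.End.aeval_apply_of_hasEigenvector hev] at hzy
      rcases smul_eq_zero.mp hzy with h | h
      · exact hg0 h
      · exact hy0 h
  have hEfix : ∀ x ∈ E, f x = α 0 • x := by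
    intro x hx
    rw [hEdef, Module.End.mem_maxGenEigenspace] at hx
    obtain ⟨k, hk⟩ := hx
    have h1 := key k x hk
    rw [LinearMap.sub_apply, LinearMap.smul_apply, Module.End.one_apply, sub_eq_zero] at h1
    exact h1
  -- `E` is one-dimensional and equals the span of `p`
  have hF : f.restrict hEinv = (α 0) • (1 : Module.End ℂ E) := by
    apply LinearMap.ext
    intro x
    apply Subtype.ext
    rw [LinearMap.restrict_coe_apply]
    simp only [LinearMap.smul_apply, Module.End.one_apply, SetLike.val_smul]
    exact hEfix x x.2
  have hchar2 : f.charpoly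
      = (X - C (α 0)) ^ (Module.finrank ℂ E) * (f.restrict hWinv).charpoly := by
    rw [Stmt6Aux.charpoly_eq_mul f hcompl hEinv hWinv, hF, Stmt6Aux.charpoly_smul_one]
  have hdvd : (X - C (α 0)) ^ (Module.finrank ℂ E) ∣ ∏ j, (X - C (α j)) := by
    rw [← hfchar, hchar2]
    exact Dvd.intro _ rfl
  haveI hEnt : Nontrivial E :=
    ⟨⟨⟨p, hpE⟩, 0, fun hcon => hp (by simpa using congrArg Subtype.val hcon)⟩⟩
  have hEpos : 0 < Module.finrank ℂ E := Module.finrank_pos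
  have hE1 : Module.finrank ℂ E = 1 := by
    by_contra hcon
    have h2le : 2 ≤ Module.finrank ℂ E := by omega
    have hd2 : (X - C (α 0)) ^ 2 ∣ (X - C (α 0)) * g0 := by
      rw [← hsplit]
      exact dvd_trans (pow_dvd_pow _ h2le) hdvd
    obtain ⟨q, hq⟩ := hd2
    rw [sq, mul_assoc] at hq
    have hXne : (X - C (α 0)) ≠ 0 := Polynomial.X_sub_C_ne_zero (α 0)
    have hg0eq : g0 = (X - C (α 0)) * q := mul_left_cancel₀ hXne hq
    apply hg0
    rw [hg0eq, Polynomial.eval_mul, Polynomial.eval_sub, Polynomial.eval_X, Polynomial.eval_C,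
      sub_self, zero_mul]
  have hEspan : E = Submodule.span ℂ {p} := by
    refine (Submodule.eq_of_le_of_finrank_le ?_ ?_).symm
    · rw [Submodule.span_le, Set.singleton_subset_iff]
      exact hpE
    · rw [hE1, finrank_span_singleton hp]
  -- the operator `gc` on `Wsub` and its spectral radius
  set G : Module.End ℂ Wsub := f.restrict hWinv with hGdef
  set ε : Module.End ℂ Wsub ≃ₐ[ℂ] (Wsub →L[ℂ] Wsub) :=
    AlgEquiv.ofLinearEquiv LinearMap.toContinuousLinearMap rfl (fun g₁ g₂ => rfl) with hεdef
  set gc : Wsub →L[ℂ] Wsub := ε G with hgcdef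
  set B : NNReal := (Finset.univ.erase (0 : Fin (n + 1))).sup (fun j => ‖α j‖₊) with hBdef
  have hB : B < ‖α 0‖₊ := by
    rw [hBdef, Finset.sup_lt_iff (show ⊥ < ‖α 0‖₊ by
      simpa [bot_eq_zero] using nnnorm_pos.mpr hα0)]
    intro j hj
    have h1 : ‖α j‖ < ‖α 0‖ :=
      lt_of_le_of_ne (hmax j) (hne j (Finset.mem_erase.mp hj).1)
    exact_mod_cast h1
  have hspec : ∀ μ ∈ spectrum ℂ gc, ‖μ‖₊ ≤ B := by
    intro μ hμ
    rw [hgcdef, AlgEquiv.spectrum_eq] at hμ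
    have hev : G.HasEigenvalue μ := Module.End.hasEigenvalue_iff_mem_spectrum.mpr hμ
    obtain ⟨x, hx⟩ := hev.exists_hasEigenvector
    have hx0 : (x : Fin (n + 1) → ℂ) ≠ 0 := fun h => hx.2 (Subtype.ext h)
    have hfx : f ↑x = μ • (x : Fin (n + 1) → ℂ) := by
      have h1 := congrArg Subtype.val hx.apply_eq_smul
      rw [hGdef, LinearMap.restrict_coe_apply] at h1
      exact h1
    have hμf : f.HasEigenvalue μ :=
      Module.End.hasEigenvalue_of_hasEigenvector
        ⟨Module.End.mem_eigenspace_iff.mpr hfx, hx0⟩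
    obtain ⟨j, hj⟩ := heval μ hμf
    have hj0 : j ≠ 0 := by
      rintro rfl
      have hxE : (x : Fin (n + 1) → ℂ) ∈ E := hmemE _ (by rw [hfx, hj])
      exact hx0 (Submodule.disjoint_def.mp hdisj _ hxE x.2)
    rw [hj, hBdef]
    exact Finset.le_sup (f := fun j => ‖α j‖₊) (Finset.mem_erase.mpr ⟨hj0, Finset.mem_univ j⟩)
  have hsr : spectralRadius ℂ gc ≤ (B : ENNReal) := by
    rw [spectralRadius]
    exact iSup₂_le fun μ hμ => by exact_mod_cast hspec μ hμ
  obtain ⟨r, hBr, hrα⟩ := exists_between hB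
  have hgel := spectrum.pow_nnnorm_pow_one_div_tendsto_nhds_spectralRadius gc
  have hev1 : ∀ᶠ (m : ℕ) in atTop, (‖gc ^ m‖₊ : ENNReal) ^ (1 / (m : ℝ)) < (r : ENNReal) :=
    hgel.eventually_lt_const (lt_of_le_of_lt hsr (by exact_mod_cast hBr))
  have hop : ∀ᶠ (m : ℕ) in atTop, ∀ x : Wsub, ‖(gc ^ m) x‖ ≤ (r : ℝ) ^ m * ‖x‖ := by
    filter_upwards [hev1, eventually_ge_atTop 1] with m hm hm1
    have hmne : (m : ℝ) ≠ 0 := Nat.cast_ne_zero.mpr (by omega)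
    have hnorm : (‖gc ^ m‖₊ : ENNReal) < (r : ENNReal) ^ (m : ℝ) := by
      have h2 := ENNReal.rpow_lt_rpow hm (show (0 : ℝ) < m by positivity)
      rwa [← ENNReal.rpow_mul, one_div_mul_cancel hmne, ENNReal.rpow_one] at h2
    have hnorm2 : ‖gc ^ m‖ ≤ (r : ℝ) ^ m := by
      have h3 : (‖gc ^ m‖₊ : ENNReal) ≤ ((r ^ m : NNReal) : ENNReal) :=
        le_of_lt (by rwa [ENNReal.rpow_natCast, ← ENNReal.coe_pow] at hnorm)
      have h4 : ‖gc ^ m‖₊ ≤ r ^ m := ENNReal.coe_le_coe.mp h3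
      exact_mod_cast h4
    intro x
    calc ‖(gc ^ m) x‖ ≤ ‖gc ^ m‖ * ‖x‖ := (gc ^ m).le_opNorm x
      _ ≤ (r : ℝ) ^ m * ‖x‖ := mul_le_mul_of_nonneg_right hnorm2 (norm_nonneg x)
  -- matrix powers
  have hpowM : ∀ m : ℕ, ((T ^ m : GL (Fin (n + 1)) ℂ) : Matrix (Fin (n + 1)) (Fin (n + 1)) ℂ)
      = M ^ m := fun m => Units.val_pow_eq_pow_val T m
  have hmulVecLin_pow : ∀ m : ℕ, Matrix.mulVecLin (M ^ m) = f ^ m := by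
    intro m
    induction m with
    | zero => rw [pow_zero, pow_zero, Matrix.mulVecLin_one]; rfl
    | succ m ih => rw [pow_succ, pow_succ, Matrix.mulVecLin_mul, ih]; rfl
  have key2 : ∀ (m : ℕ) (v : Fin (n + 1) → ℂ),
      ((T ^ m : GL (Fin (n + 1)) ℂ) : Matrix (Fin (n + 1)) (Fin (n + 1)) ℂ).mulVec v
        = (f ^ m) v := by
    intro m v
    rw [hpowM m, ← hmulVecLin_pow m, Matrix.mulVecLin_apply]
  have hfpm : ∀ m : ℕ, (f ^ m) p = (α 0) ^ m • p := by
    intro m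
    induction m with
    | zero => simp
    | succ m ih =>
      rw [pow_succ', Module.End.mul_apply, ih, _root_.map_smul, hfp, smul_smul, ← pow_succ]
  -- membership characterization of `U`
  set U : Set (Projectivization ℂ (Fin (n + 1) → ℂ)) :=
    {x | ∀ (w : Fin (n + 1) → ℂ) (hw : w ≠ 0), Projectivization.mk ℂ w hw = x → w ∉ Wsub}
    with hUdef
  have hUmem : ∀ (v : Fin (n + 1) → ℂ) (hv : v ≠ 0),
      (Projectivization.mk ℂ v hv ∈ U ↔ v ∉ Wsub) := by
    intro v hv
    constructor
    · intro h; exact h v hv rfl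
    · intro hvW w hw hmk
      obtain ⟨a, ha⟩ := (Projectivization.mk_eq_mk_iff ℂ w v hw hv).mp hmk
      intro hwW
      apply hvW
      have h1 : v = (a⁻¹ : ℂˣ) • w := by rw [← ha, inv_smul_smul]
      rw [h1, Units.smul_def]
      exact Submodule.smul_mem Wsub _ hwW
  refine ⟨?_, U, ?_, ?_, ?_⟩
  · -- fixed point
    rw [hproj T p hp, Projectivization.mk_eq_mk_iff]
    refine ⟨Units.mk0 (α 0) hα0, ?_⟩
    rw [Units.smul_def, Units.val_mk0]
    exact hTp.symm
  · -- openness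
    have hWclosed : IsClosed ((Wsub : Set (Fin (n + 1) → ℂ))) :=
      Submodule.closed_of_finiteDimensional Wsub
    have hopen : IsOpen {z : {x : Fin (n + 1) → ℂ // x ≠ 0} |
        (z : Fin (n + 1) → ℂ) ∉ Wsub} :=
      (hWclosed.preimage continuous_subtype_val).isOpen_compl
    have hquot : IsQuotientMap (Projectivization.mk' ℂ :
        {x : Fin (n + 1) → ℂ // x ≠ 0} → Projectivization ℂ (Fin (n + 1) → ℂ)) :=
      isQuotientMap_quot_mk
    have hpre : (Projectivization.mk' ℂ ⁻¹' U)
        = {z : {x : Fin (n + 1) → ℂ // x ≠ 0} | (z : Fin (n + 1) → ℂ) ∉ Wsub} := by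
      ext z
      rcases z with ⟨w, hw⟩
      rw [Set.mem_preimage, Projectivization.mk'_eq_mk]
      exact hUmem w hw
    rw [← hquot.isOpen_preimage, hpre]
    exact hopen
  · -- membership of `[p]`
    rw [hUmem p hp]
    intro hpW
    exact hp (Submodule.disjoint_def.mp hdisj p hpE hpW)
  · -- convergence
    intro q hq
    set v : Fin (n + 1) → ℂ := q.rep with hvdef
    have hv : v ≠ 0 := q.rep_nonzero
    have hvW : v ∉ Wsub := by
      have h1 := Projectivization.mk_rep q
      rw [← h1] at hq
      exact (hUmem _ _).mp hq
    have hvT : v ∈ E ⊔ Wsub := by rw [hsup]; trivial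
    obtain ⟨y, hy, w, hwW, hsum⟩ := Submodule.mem_sup.mp hvT
    obtain ⟨c, hc⟩ := Submodule.mem_span_singleton.mp (by rw [← hEspan]; exact hy)
    have hc0 : c ≠ 0 := by
      rintro rfl
      rw [zero_smul] at hc
      apply hvW
      rw [← hsum, ← hc, zero_add]
      exact hwW
    have hcα : ∀ m : ℕ, c * (α 0) ^ m ≠ 0 := fun m => mul_ne_zero hc0 (pow_ne_zero m hα0)
    have hfvm : ∀ m : ℕ, (f ^ m) v = (c * (α 0) ^ m) • p + (f ^ m) w := by
      intro m
      rw [← hsum, map_add, ← hc, _root_.map_smul, hfpm m, smul_smul]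
    have hfvne : ∀ m : ℕ, (f ^ m) v ≠ 0 := by
      intro m
      rw [← key2 m v]
      exact hne0 _ v hv
    set u : ℕ → (Fin (n + 1) → ℂ) := fun m => (c * (α 0) ^ m)⁻¹ • (f ^ m) v with hudef
    have hune : ∀ m, u m ≠ 0 := fun m =>
      smul_ne_zero (inv_ne_zero (hcα m)) (hfvne m)
    have hup : ∀ m, u m = p + (c * (α 0) ^ m)⁻¹ • (f ^ m) w := by
      intro m
      rw [hudef]
      show (c * (α 0) ^ m)⁻¹ • (f ^ m) v = _
      rw [hfvm m, smul_add, inv_smul_smul₀ (hcα m)]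
    -- norm bound for `(f ^ m) w`
    have hwnorm : ∀ᶠ (m : ℕ) in atTop, ‖(f ^ m) w‖ ≤ (r : ℝ) ^ m * ‖w‖ := by
      filter_upwards [hop] with m hm
      have h1 : (f ^ m) w = (((G ^ m) ⟨w, hwW⟩ : Wsub) : Fin (n + 1) → ℂ) :=
        (Stmt6Aux.restrict_pow_apply f hWinv m ⟨w, hwW⟩).symm
      have h2 : (G ^ m) ⟨w, hwW⟩ = (gc ^ m) ⟨w, hwW⟩ := by
        rw [hgcdef, ← map_pow]
        rfl
      calc ‖(f ^ m) w‖ = ‖(gc ^ m) ⟨w, hwW⟩‖ := by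
            rw [h1, h2]; exact Submodule.norm_coe _
        _ ≤ (r : ℝ) ^ m * ‖(⟨w, hwW⟩ : Wsub)‖ := hm _
        _ = (r : ℝ) ^ m * ‖w‖ := rfl
    have hcn : ‖c‖ ≠ 0 := norm_ne_zero_iff.mpr hc0
    have hαn : ‖α 0‖ ≠ 0 := norm_ne_zero_iff.mpr hα0
    have hup2 : Tendsto u atTop (𝓝 p) := by
      rw [tendsto_iff_norm_sub_tendsto_zero]
      have hbound : ∀ᶠ (m : ℕ) in atTop,
          ‖u m - p‖ ≤ (‖c‖⁻¹ * ‖w‖) * ((r : ℝ) / ‖α 0‖) ^ m := by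
        filter_upwards [hwnorm] with m hm
        have h3 : u m - p = (c * (α 0) ^ m)⁻¹ • (f ^ m) w := by
          rw [hup m, add_sub_cancel_left]
        rw [h3, norm_smul, norm_inv, norm_mul, norm_pow]
        calc (‖c‖ * ‖α 0‖ ^ m)⁻¹ * ‖(f ^ m) w‖
            ≤ (‖c‖ * ‖α 0‖ ^ m)⁻¹ * ((r : ℝ) ^ m * ‖w‖) := by
              apply mul_le_mul_of_nonneg_left hm (by positivity)
          _ = (‖c‖⁻¹ * ‖w‖) * ((r : ℝ) / ‖α 0‖) ^ m := by
              rw [mul_inv, div_pow]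
              field_simp
      have htend0 : Tendsto (fun m : ℕ => (‖c‖⁻¹ * ‖w‖) * ((r : ℝ) / ‖α 0‖) ^ m) atTop (𝓝 0) := by
        have h4 : Tendsto (fun m : ℕ => ((r : ℝ) / ‖α 0‖) ^ m) atTop (𝓝 0) := by
          apply tendsto_pow_atTop_nhds_zero_of_lt_one (by positivity)
          rw [div_lt_one (norm_pos_iff.mpr hα0)]
          have : (r : ℝ) < (‖α 0‖₊ : ℝ) := by exact_mod_cast hrα
          simpa using this
        simpa using h4.const_mul (‖c‖⁻¹ * ‖w‖)
      exact squeeze_zero' (Eventually.of_forall fun m => norm_nonneg _) hbound htend0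
    have hsub : Tendsto (fun m => (⟨u m, hune m⟩ : {x : Fin (n + 1) → ℂ // x ≠ 0})) atTop
        (𝓝 ⟨p, hp⟩) := by
      rw [tendsto_subtype_rng]
      exact hup2
    have hq2 : Tendsto (fun m => Projectivization.mk ℂ (u m) (hune m)) atTop
        (𝓝 (Projectivization.mk ℂ p hp)) := by
      have hquot : IsQuotientMap (Projectivization.mk' ℂ :
          {x : Fin (n + 1) → ℂ // x ≠ 0} → Projectivization ℂ (Fin (n + 1) → ℂ)) :=
        isQuotientMap_quot_mk
      exact (hquot.continuous.tendsto _).comp hsub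
    refine hq2.congr fun m => ?_
    show Projectivization.mk ℂ (u m) (hune m) = projAct (T ^ m) q
    conv_rhs => rw [← Projectivization.mk_rep q]
    rw [hproj (T ^ m) _ q.rep_nonzero, Projectivization.mk_eq_mk_iff]
    refine ⟨Units.mk0 ((c * (α 0) ^ m)⁻¹) (inv_ne_zero (hcα m)), ?_⟩
    rw [Units.smul_def, Units.val_mk0, key2 m]
end
end

section
/- Let k, l ≥ 1 and let T ∈ U(k,l). If T is diagonalizable and every eigenvalue of T has modulus 1, then T has an eigenvector v with ⟨v,v⟩_{k,l} ≤ 0. -/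
open Matrix

noncomputable section

/-- The Hermitian form `⟨u,v⟩_{k,l} = −∑_{j<k} u_j conj(v_j) + ∑_{j≥k} u_j conj(v_j)`
of signature `(k,l)` on `ℂ^{k+l}` (indices `j < k` are the negative ones). -/
def hform (k l : ℕ) (u v : Fin (k + l) → ℂ) : ℂ :=
  ∑ j : Fin (k + l),
    if (j : ℕ) < k then -(u j * starRingEnd ℂ (v j)) else u j * starRingEnd ℂ (v j)

lemma hform_eq (k l : ℕ) (u v : Fin (k + l) → ℂ) :
    hform k l u v = ∑ j : Fin (k + l),
      (if (j : ℕ) < k then (-1 : ℂ) else 1) * (u j * starRingEnd ℂ (v j)) := by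
  unfold hform
  refine Finset.sum_congr rfl fun j _ => ?_
  split <;> ring

lemma hform_sum_sum {k l : ℕ} {ι : Type*} (s : Finset ι) (f g : ι → Fin (k + l) → ℂ) :
    hform k l (∑ i ∈ s, f i) (∑ i ∈ s, g i) =
      ∑ i ∈ s, ∑ j ∈ s, hform k l (f i) (g j) := by
  calc hform k l (∑ i ∈ s, f i) (∑ i ∈ s, g i)
      = ∑ x : Fin (k + l), ∑ i ∈ s, ∑ j ∈ s,
          (if (x : ℕ) < k then (-1 : ℂ) else 1) * (f i x * starRingEnd ℂ (g j x)) := by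
        rw [hform_eq]
        refine Finset.sum_congr rfl fun x _ => ?_
        rw [Finset.sum_apply, Finset.sum_apply, map_sum, Finset.sum_mul_sum, Finset.mul_sum]
        exact Finset.sum_congr rfl fun i _ => by rw [Finset.mul_sum]
    _ = _ := by
        rw [Finset.sum_comm]
        refine Finset.sum_congr rfl fun i _ => ?_
        rw [Finset.sum_comm]
        refine Finset.sum_congr rfl fun j _ => ?_
        rw [hform_eq]

lemma hform_smul_smul {k l : ℕ} (a b : ℂ) (u v : Fin (k + l) → ℂ) :
    hform k l (a • u) (b • v) = (a * starRingEnd ℂ b) * hform k l u v := by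
  rw [hform_eq, hform_eq, Finset.mul_sum]
  refine Finset.sum_congr rfl fun j _ => ?_
  simp only [Pi.smul_apply, smul_eq_mul, _root_.map_mul]
  ring

lemma mem_spectrum_of_eigen {n : ℕ} (A : Matrix (Fin n) (Fin n) ℂ) (μ : ℂ)
    (v : Fin n → ℂ) (hv : v ≠ 0) (h : A.mulVec v = μ • v) : μ ∈ spectrum ℂ A := by
  rw [spectrum.mem_iff]
  intro hu
  apply hv
  have h0 : (algebraMap ℂ (Matrix (Fin n) (Fin n) ℂ) μ - A).mulVec v = 0 := by
    rw [Matrix.sub_mulVec, h, Algebra.algebraMap_eq_smul_one, Matrix.smul_mulVec,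
      Matrix.one_mulVec, sub_self]
  obtain ⟨B, hB⟩ := hu
  calc v = (1 : Matrix (Fin n) (Fin n) ℂ).mulVec v := (Matrix.one_mulVec v).symm
    _ = ((B⁻¹).val * B.val).mulVec v := by rw [B.inv_mul]
    _ = (B⁻¹).val.mulVec (B.val.mulVec v) :=
        (Matrix.mulVec_mulVec v _ _).symm
    _ = 0 := by rw [hB, h0, Matrix.mulVec_zero]

/-- If `T ∈ U(k,l)` is diagonalizable and every eigenvalue of `T`
has modulus 1, then `T` has an eigenvector `v` with `⟨v,v⟩_{k,l} ≤ 0` (the form takes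
real values on the diagonal, so this is expressed via the real part). -/
theorem stmt10 (k l : ℕ) (hk : 1 ≤ k) (hl : 1 ≤ l) (T : GL (Fin (k + l)) ℂ)
    (hU : ∀ u v : Fin (k + l) → ℂ,
      hform k l ((T : Matrix (Fin (k + l)) (Fin (k + l)) ℂ).mulVec u)
        ((T : Matrix (Fin (k + l)) (Fin (k + l)) ℂ).mulVec v) = hform k l u v)
    (hdiag : IsDiagonalizable (T : Matrix (Fin (k + l)) (Fin (k + l)) ℂ))
    (huni : ∀ μ ∈ spectrum ℂ (T : Matrix (Fin (k + l)) (Fin (k + l)) ℂ), ‖μ‖ = 1) :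
    ∃ v : Fin (k + l) → ℂ, v ≠ 0 ∧
      (∃ μ : ℂ, (T : Matrix (Fin (k + l)) (Fin (k + l)) ℂ).mulVec v = μ • v) ∧
      (hform k l v v).re ≤ 0 := by
  by_contra hcon
  push_neg at hcon
  obtain ⟨P, d, hPd⟩ := hdiag
  set A : Matrix (Fin (k + l)) (Fin (k + l)) ℂ := (T : Matrix (Fin (k + l)) (Fin (k + l)) ℂ)
    with hA
  have hAP : A * (↑P : Matrix (Fin (k + l)) (Fin (k + l)) ℂ)
      = (↑P : Matrix (Fin (k + l)) (Fin (k + l)) ℂ) * Matrix.diagonal d := by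
    have h1 := congrArg (fun M => (↑P : Matrix (Fin (k + l)) (Fin (k + l)) ℂ) * M) hPd
    simp only [← mul_assoc] at h1
    rwa [Units.mul_inv, one_mul] at h1
  -- columns of P are eigenvectors
  set col : Fin (k + l) → Fin (k + l) → ℂ :=
    fun i j => (↑P : Matrix (Fin (k + l)) (Fin (k + l)) ℂ) j i with hcol
  have hcolne : ∀ i, col i ≠ 0 := by
    intro i hzero
    have hz : ∀ x, (↑P : Matrix (Fin (k + l)) (Fin (k + l)) ℂ) x i = 0 :=
      fun x => congrFun hzero x
    have h1 : ((P⁻¹).val * P.val) i i = 1 := by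
      rw [P.inv_mul]
      exact Matrix.one_apply_eq i
    rw [Matrix.mul_apply] at h1
    simp [hz] at h1
  have hcoleig : ∀ i, A.mulVec (col i) = d i • col i := by
    intro i
    funext j
    have h2 : A.mulVec (col i) j = (A * (↑P : Matrix (Fin (k + l)) (Fin (k + l)) ℂ)) j i := by
      simp [Matrix.mulVec, Matrix.mul_apply, dotProduct, hcol]
    rw [h2, hAP, Matrix.mul_apply]
    simp [Matrix.diagonal_apply, hcol, mul_comm]
  have hdnorm : ∀ i, ‖d i‖ = 1 :=
    fun i => huni _ (mem_spectrum_of_eigen A (d i) (col i) (hcolne i) (hcoleig i))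
  -- orthogonality of eigenvectors for distinct unit eigenvalues
  have horth : ∀ (μ ν : ℂ) (u w : Fin (k + l) → ℂ), ‖μ‖ = 1 → ‖ν‖ = 1 → μ ≠ ν →
      A.mulVec u = μ • u → A.mulVec w = ν • w → hform k l u w = 0 := by
    intro μ ν u w hμ hν hne hu hw
    have h1 : hform k l u w = (μ * starRingEnd ℂ ν) * hform k l u w := by
      conv_lhs => rw [← hU u w]
      rw [hu, hw, hform_smul_smul]
    have h2 : (μ * starRingEnd ℂ ν - 1) * hform k l u w = 0 := by
      rw [sub_mul, one_mul, ← h1, sub_self]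
    rcases mul_eq_zero.mp h2 with h3 | h3
    · exfalso
      apply hne
      have h4 : μ * starRingEnd ℂ ν = 1 := by linear_combination h3
      have hν0 : ν ≠ 0 := by
        intro h; rw [h] at hν; simp at hν
      have h5 : ν * starRingEnd ℂ ν = 1 := by
        rw [Complex.mul_conj]
        norm_cast
        rw [Complex.normSq_eq_norm_sq, hν, one_pow]
      have hν0' : starRingEnd ℂ ν ≠ 0 := by
        simpa using hν0
      exact mul_right_cancel₀ hν0' (h4.trans h5.symm)
    · exact h3
  -- decompose e_0 along eigenspaces
  have hi0 : 0 < k + l := lt_of_lt_of_le hk (Nat.le_add_right k l)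
  set i0 : Fin (k + l) := ⟨0, hi0⟩ with hi0def
  set u0 : Fin (k + l) → ℂ := Pi.single i0 1 with hu0
  set c : Fin (k + l) → ℂ := (↑(P⁻¹) : Matrix (Fin (k + l)) (Fin (k + l)) ℂ).mulVec u0 with hc
  set w : ℂ → (Fin (k + l) → ℂ) :=
    fun μ => ∑ i ∈ Finset.univ.filter (fun i => d i = μ), c i • col i with hwdef
  set s : Finset ℂ := Finset.univ.image d with hs
  have hPc : ∑ i : Fin (k + l), c i • col i = u0 := by
    funext j
    have h1 : (∑ i : Fin (k + l), c i • col i) j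
        = (↑P : Matrix (Fin (k + l)) (Fin (k + l)) ℂ).mulVec c j := by
      simp [Matrix.mulVec, dotProduct, hcol, mul_comm]
    rw [h1, hc, Matrix.mulVec_mulVec, Units.mul_inv, Matrix.one_mulVec]
  have hsum : ∑ μ ∈ s, w μ = u0 := by
    rw [hwdef, hs, ← hPc]
    exact Finset.sum_fiberwise_of_maps_to (fun i _ => Finset.mem_image_of_mem d (Finset.mem_univ i)) _
  have hweig : ∀ μ, A.mulVec (w μ) = μ • w μ := by
    intro μ
    rw [hwdef]
    simp only
    rw [← Matrix.mulVecLin_apply, map_sum, Finset.smul_sum]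
    refine Finset.sum_congr rfl fun i hi => ?_
    have hdi : d i = μ := (Finset.mem_filter.mp hi).2
    rw [Matrix.mulVecLin_apply, Matrix.mulVec_smul, hcoleig i, hdi, smul_comm]
  have hsnorm : ∀ μ ∈ s, ‖μ‖ = 1 := by
    intro μ hμ
    obtain ⟨i, _, rfl⟩ := Finset.mem_image.mp hμ
    exact hdnorm i
  have hwre : ∀ μ ∈ s, 0 ≤ (hform k l (w μ) (w μ)).re := by
    intro μ hμ
    by_cases h0 : w μ = 0
    · rw [h0]
      simp [hform]
    · exact le_of_lt (hcon (w μ) h0 ⟨μ, hweig μ⟩)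
  have hexp : hform k l u0 u0 = ∑ μ ∈ s, hform k l (w μ) (w μ) := by
    rw [← hsum, hform_sum_sum]
    refine Finset.sum_congr rfl fun μ hμ => ?_
    rw [Finset.sum_eq_single μ]
    · intro ν hν hne
      exact horth μ ν _ _ (hsnorm μ hμ) (hsnorm ν hν) (Ne.symm hne) (hweig μ) (hweig ν)
    · intro h
      exact absurd hμ h
  have hge : 0 ≤ (hform k l u0 u0).re := by
    rw [hexp, Complex.re_sum]
    exact Finset.sum_nonneg hwre
  have hval : hform k l u0 u0 = -1 := by
    unfold hform
    rw [Finset.sum_eq_single i0]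
    · have : ((i0 : Fin (k + l)) : ℕ) < k := hk
      simp [this, hu0]
    · intro j _ hj
      have : u0 j = 0 := Pi.single_eq_of_ne hj 1
      simp [this]
    · intro h
      exact absurd (Finset.mem_univ i0) h
  rw [hval] at hge
  norm_num at hge
end
end

section
/- Let k, l ≥ 1 and let T ∈ U(k,l) be diagonalizable with every eigenvalue of modulus 1. Then there exists a basis v₁, …, v_{k+l} of ℂ^{k+l} consisting of eigenvectors of T such that ⟨v_j,v_j⟩_{k,l} < 0 for j = 1, …, k and ⟨v_j,v_j⟩_{k,l} > 0 for j = k+1, …, k+l. -/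
open Matrix

noncomputable section

namespace Stmt13Aux

/-! ### sesquilinearity lemmas for `hform` -/

variable {k l : ℕ}

lemma hform_eq (u v : Fin (k + l) → ℂ) :
    hform k l u v = ∑ j : Fin (k+l), (if (j : ℕ) < k then (-1 : ℂ) else 1) * (u j * starRingEnd ℂ (v j)) := by
  unfold hform
  refine Finset.sum_congr rfl fun j _ => ?_
  split <;> ring

lemma hform_conj (u v : Fin (k + l) → ℂ) :
    starRingEnd ℂ (hform k l u v) = hform k l v u := by
  rw [hform_eq, hform_eq, map_sum]
  refine Finset.sum_congr rfl fun j _ => ?_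
  split <;> (simp only [_root_.map_mul, map_neg, _root_.map_one, Complex.conj_conj]; ring)

lemma hform_sum_left {ι : Type*} (s : Finset ι) (f : ι → Fin (k + l) → ℂ) (v : Fin (k+l) → ℂ) :
    hform k l (∑ i ∈ s, f i) v = ∑ i ∈ s, hform k l (f i) v := by
  simp only [hform_eq, Finset.sum_apply, Finset.sum_mul, Finset.mul_sum]
  exact Finset.sum_comm

lemma hform_sum_right {ι : Type*} (s : Finset ι) (u : Fin (k+l) → ℂ) (g : ι → Fin (k + l) → ℂ) :
    hform k l u (∑ i ∈ s, g i) = ∑ i ∈ s, hform k l u (g i) := by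
  simp only [hform_eq, Finset.sum_apply, map_sum, Finset.mul_sum]
  exact Finset.sum_comm

lemma hform_smul_left (a : ℂ) (u v : Fin (k+l) → ℂ) :
    hform k l (a • u) v = a * hform k l u v := by
  simp only [hform_eq, Finset.mul_sum, Pi.smul_apply, smul_eq_mul]
  refine Finset.sum_congr rfl fun j _ => by ring

lemma hform_smul_right (a : ℂ) (u v : Fin (k+l) → ℂ) :
    hform k l u (a • v) = starRingEnd ℂ a * hform k l u v := by
  simp only [hform_eq, Finset.mul_sum, Pi.smul_apply, smul_eq_mul, _root_.map_mul]
  refine Finset.sum_congr rfl fun j _ => by ring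

lemma hform_self_re (u : Fin (k+l) → ℂ) :
    (hform k l u u).re
      = ∑ j : Fin (k+l), (if (j : ℕ) < k then (-1 : ℝ) else 1) * Complex.normSq (u j) := by
  rw [hform_eq, Complex.re_sum]
  refine Finset.sum_congr rfl fun j _ => ?_
  rw [Complex.mul_conj]
  split <;> simp

/-- the matrix of the form -/
def JM (k l : ℕ) : Matrix (Fin (k+l)) (Fin (k+l)) ℂ :=
  Matrix.diagonal fun j => if (j : ℕ) < k then (-1 : ℂ) else 1

/-- the Gram matrix of the columns of `W` -/
def gram (k l : ℕ) (W : Matrix (Fin (k+l)) (Fin (k+l)) ℂ) : Matrix (Fin (k+l)) (Fin (k+l)) ℂ :=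
  Matrix.of fun a b => hform k l (fun m => W m a) (fun m => W m b)

lemma gram_eq (W : Matrix (Fin (k+l)) (Fin (k+l)) ℂ) :
    gram k l W = Wᵀ * JM k l * W.map (starRingEnd ℂ) := by
  ext a b
  show hform k l (fun m => W m a) (fun m => W m b) = _
  rw [Matrix.mul_assoc, hform_eq, Matrix.mul_apply]
  refine Finset.sum_congr rfl fun m _ => ?_
  rw [Matrix.transpose_apply, JM, Matrix.diagonal_mul, Matrix.map_apply]
  ring

lemma gram_mul (V W : Matrix (Fin (k+l)) (Fin (k+l)) ℂ) :
    gram k l (V * W) = Wᵀ * gram k l V * W.map (starRingEnd ℂ) := by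
  rw [gram_eq, gram_eq, Matrix.transpose_mul, Matrix.map_mul]
  simp only [Matrix.mul_assoc]

end Stmt13Aux

namespace Stmt13Aux

section Blocks

attribute [local instance 10] Classical.propDecidable

variable {n : ℕ} (d : Fin n → ℂ)

/-- the reindexing of `Fin n` by eigenvalue fibers -/
def esig : (Σ μ : ↥(Set.range d), {x : Fin n // d x = μ.1}) ≃ Fin n where
  toFun x := x.2.1
  invFun i := ⟨⟨d i, Set.mem_range_self i⟩, ⟨i, rfl⟩⟩
  left_inv := by
    rintro ⟨⟨μ, hμ⟩, ⟨i, hi⟩⟩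
    have hi' : d i = μ := hi
    subst hi'
    rfl
  right_inv i := rfl

lemma esig_symm_apply (a : Fin n) :
    (esig d).symm a = ⟨⟨d a, Set.mem_range_self a⟩, ⟨a, rfl⟩⟩ := rfl

lemma sigma_eq (μ ν : ↥(Set.range d)) (x : {x : Fin n // d x = μ.1})
    (y : {x : Fin n // d x = ν.1}) (h : x.1 = y.1) :
    (⟨μ, x⟩ : Σ σ : ↥(Set.range d), {x : Fin n // d x = σ.1}) = ⟨ν, y⟩ := by
  obtain ⟨μ, hμ⟩ := μ; obtain ⟨ν, hν⟩ := ν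
  obtain ⟨x, hx⟩ := x; obtain ⟨y, hy⟩ := y
  dsimp at h
  cases h
  have hx' : d x = μ := hx
  have hy' : d x = ν := hy
  have hμν : μ = ν := by rw [← hx', hy']
  subst hμν
  rfl

variable (G : Matrix (Fin n) (Fin n) ℂ)

/-- diagonal blocks of `G` -/
def Gblk (μ : ↥(Set.range d)) :
    Matrix {x : Fin n // d x = μ.1} {x : Fin n // d x = μ.1} ℂ :=
  G.submatrix Subtype.val Subtype.val

lemma Gblk_isHermitian (hG : G.IsHermitian) (μ : ↥(Set.range d)) :
    (Gblk d G μ).IsHermitian :=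
  hG.submatrix _

/-- blockwise unitary diagonalizing each diagonal block of `G` -/
def Ublk (hG : G.IsHermitian) (μ : ↥(Set.range d)) :
    Matrix {x : Fin n // d x = μ.1} {x : Fin n // d x = μ.1} ℂ :=
  ((Gblk_isHermitian d G hG μ).eigenvectorUnitary : Matrix _ _ ℂ)

/-- the assembled block-diagonal unitary -/
def Rmat (hG : G.IsHermitian) : Matrix (Fin n) (Fin n) ℂ :=
  (Matrix.blockDiagonal' (Ublk d G hG)).submatrix (esig d).symm (esig d).symm

/-- the diagonal entries of `Rᴴ G R` -/
def cdiag (hG : G.IsHermitian) : Fin n → ℂ := fun i =>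
  (((Gblk_isHermitian d G hG ⟨d i, Set.mem_range_self i⟩).eigenvalues ⟨i, rfl⟩ : ℝ) : ℂ)

lemma cdiag_real (hG : G.IsHermitian) (i : Fin n) :
    cdiag d G hG i = ((cdiag d G hG i).re : ℂ) := by
  simp [cdiag]

lemma Rmat_support (hG : G.IsHermitian) {a b : Fin n} (hab : d a ≠ d b) :
    Rmat d G hG a b = 0 := by
  show Matrix.blockDiagonal' (Ublk d G hG) ((esig d).symm a) ((esig d).symm b) = 0
  rw [esig_symm_apply, esig_symm_apply]
  exact Matrix.blockDiagonal'_apply_ne _ _ _ (fun h => hab (congrArg Subtype.val h))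

lemma Rmat_unitary (hG : G.IsHermitian) : (Rmat d G hG)ᴴ * Rmat d G hG = 1 := by
  unfold Rmat
  rw [conjTranspose_submatrix, Matrix.blockDiagonal'_conjTranspose,
    Matrix.submatrix_mul_equiv, ← Matrix.blockDiagonal'_mul]
  have h1 : (fun μ : ↥(Set.range d) => (Ublk d G hG μ)ᴴ * Ublk d G hG μ)
      = (1 : ∀ μ : ↥(Set.range d),
          Matrix {x : Fin n // d x = μ.1} {x : Fin n // d x = μ.1} ℂ) := by
    funext μ
    have h := Matrix.mem_unitaryGroup_iff'.mp ((Gblk_isHermitian d G hG μ).eigenvectorUnitary).2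
    simpa [Matrix.star_eq_conjTranspose, Ublk] using h
  rw [h1, Matrix.blockDiagonal'_one, Matrix.submatrix_one_equiv]

lemma G_split (hblock : ∀ a b, d a ≠ d b → G a b = 0) :
    G = (Matrix.blockDiagonal' (Gblk d G)).submatrix (esig d).symm (esig d).symm := by
  ext a b
  show G a b = Matrix.blockDiagonal' (Gblk d G) ((esig d).symm a) ((esig d).symm b)
  rw [esig_symm_apply, esig_symm_apply]
  by_cases hab : d a = d b
  · rw [show (⟨⟨d b, Set.mem_range_self b⟩, ⟨b, rfl⟩⟩ :
        Σ σ : ↥(Set.range d), {x : Fin n // d x = σ.1})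
        = ⟨⟨d a, Set.mem_range_self a⟩, ⟨b, hab.symm⟩⟩ from
      sigma_eq d ⟨d b, Set.mem_range_self b⟩ ⟨d a, Set.mem_range_self a⟩
        ⟨b, rfl⟩ ⟨b, hab.symm⟩ rfl]
    rw [Matrix.blockDiagonal'_apply_eq]
    rfl
  · rw [Matrix.blockDiagonal'_apply_ne _ _ _ (fun h => hab (congrArg Subtype.val h))]
    exact hblock a b hab

lemma Rmat_spec (hG : G.IsHermitian) (hblock : ∀ a b, d a ≠ d b → G a b = 0) :
    (Rmat d G hG)ᴴ * G * Rmat d G hG = Matrix.diagonal (cdiag d G hG) := by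
  have hstep : (Rmat d G hG)ᴴ * G * Rmat d G hG
      = (Rmat d G hG)ᴴ *
        (Matrix.blockDiagonal' (Gblk d G)).submatrix (esig d).symm (esig d).symm *
        Rmat d G hG := by
    rw [← G_split d G hblock]
  rw [hstep]
  unfold Rmat
  rw [conjTranspose_submatrix, Matrix.blockDiagonal'_conjTranspose,
    Matrix.submatrix_mul_equiv, Matrix.submatrix_mul_equiv,
    ← Matrix.blockDiagonal'_mul, ← Matrix.blockDiagonal'_mul]
  have h1 : (fun μ : ↥(Set.range d) => (Ublk d G hG μ)ᴴ * Gblk d G μ * Ublk d G hG μ)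
      = fun μ : ↥(Set.range d) => Matrix.diagonal
          (fun x => ((((Gblk_isHermitian d G hG μ).eigenvalues x : ℝ)) : ℂ)) := by
    funext μ
    have h := (Gblk_isHermitian d G hG μ).conjStarAlgAut_star_eigenvectorUnitary
    simp only [Unitary.conjStarAlgAut_apply, Unitary.coe_star, star_star, Matrix.star_eq_conjTranspose, Matrix.conjTranspose_conjTranspose] at h
    exact h
  rw [h1, Matrix.blockDiagonal'_diagonal, Matrix.submatrix_diagonal_equiv]
  rfl

lemma Rmat_support' (hG : G.IsHermitian) {a b : Fin n} (h : Rmat d G hG a b ≠ 0) :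
    d a = d b := by
  by_contra hab
  exact h (Rmat_support d G hG hab)

end Blocks

end Stmt13Aux


open Stmt13Aux in
/-- If `T ∈ U(k,l)` is diagonalizable with all eigenvalues of
modulus 1, there is a basis `v₁,…,v_{k+l}` of `ℂ^{k+l}` consisting of eigenvectors of
`T` with `⟨v_j,v_j⟩ < 0` for `j ≤ k` and `⟨v_j,v_j⟩ > 0` for `j > k` (the form is real
on the diagonal, so the signs are expressed via the real part). -/
theorem stmt13 (k l : ℕ) (hk : 1 ≤ k) (hl : 1 ≤ l) (T : GL (Fin (k + l)) ℂ)
    (hU : ∀ u v : Fin (k + l) → ℂ,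
      hform k l ((T : Matrix (Fin (k + l)) (Fin (k + l)) ℂ).mulVec u)
        ((T : Matrix (Fin (k + l)) (Fin (k + l)) ℂ).mulVec v) = hform k l u v)
    (hdiag : IsDiagonalizable (T : Matrix (Fin (k + l)) (Fin (k + l)) ℂ))
    (huni : ∀ μ ∈ spectrum ℂ (T : Matrix (Fin (k + l)) (Fin (k + l)) ℂ), ‖μ‖ = 1) :
    ∃ b : Module.Basis (Fin (k + l)) ℂ (Fin (k + l) → ℂ),
      ∀ j : Fin (k + l),
        (∃ μ : ℂ, (T : Matrix (Fin (k + l)) (Fin (k + l)) ℂ).mulVec (b j) = μ • b j) ∧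
        ((j : ℕ) < k → (hform k l (b j) (b j)).re < 0) ∧
        (k ≤ (j : ℕ) → 0 < (hform k l (b j) (b j)).re) := by
  classical
  obtain ⟨P, d, hPd⟩ := hdiag
  set A : Matrix (Fin (k+l)) (Fin (k+l)) ℂ := (T : Matrix (Fin (k + l)) (Fin (k + l)) ℂ)
    with hAdef
  have hP1 : (↑P : Matrix (Fin (k+l)) (Fin (k+l)) ℂ) * (↑(P⁻¹) : Matrix (Fin (k+l)) (Fin (k+l)) ℂ) = 1 := P.mul_inv
  have hPinv : (↑(P⁻¹) : Matrix (Fin (k+l)) (Fin (k+l)) ℂ) * (↑P : Matrix (Fin (k+l)) (Fin (k+l)) ℂ) = 1 := P.inv_mul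
  have hAP : A * (↑P : Matrix (Fin (k+l)) (Fin (k+l)) ℂ)
      = (↑P : Matrix (Fin (k+l)) (Fin (k+l)) ℂ) * Matrix.diagonal d := by
    rw [← hPd, ← Matrix.mul_assoc, ← Matrix.mul_assoc, hP1, Matrix.one_mul]
  -- columns of a matrix `W` with `A * W = W * D` are eigenvectors
  have colEig : ∀ W : Matrix (Fin (k+l)) (Fin (k+l)) ℂ, A * W = W * Matrix.diagonal d →
      ∀ j, A.mulVec (fun m => W m j) = d j • (fun m => W m j) := by
    intro W hW j
    funext m
    have h2 := congrFun (congrFun hW m) j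
    rw [Matrix.mul_apply, Matrix.mul_diagonal] at h2
    show ∑ b, A m b * W b j = d j * W m j
    rw [h2, mul_comm]
  -- columns of P are nonzero
  have hpne : ∀ i, (fun m => (↑P : Matrix (Fin (k+l)) (Fin (k+l)) ℂ) m i) ≠ 0 := by
    intro i h0
    have h1 := congrFun (congrFun hPinv i) i
    rw [Matrix.mul_apply, Matrix.one_apply_eq] at h1
    have h3 : ∀ m, (↑P : Matrix (Fin (k+l)) (Fin (k+l)) ℂ) m i = 0 := fun m => congrFun h0 m
    simp [h3] at h1
  -- the d i are in the spectrum
  have hspec : ∀ i, d i ∈ spectrum ℂ A := by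
    intro i
    rw [spectrum.mem_iff]
    intro hunit
    obtain ⟨u, hu⟩ := hunit
    have heig := colEig _ hAP i
    have hker : (↑u : Matrix (Fin (k+l)) (Fin (k+l)) ℂ).mulVec
        (fun m => (↑P : Matrix (Fin (k+l)) (Fin (k+l)) ℂ) m i) = 0 := by
      rw [hu, Algebra.algebraMap_eq_smul_one, Matrix.sub_mulVec, Matrix.smul_mulVec,
        Matrix.one_mulVec, heig, sub_self]
    have h5 : (fun m => (↑P : Matrix (Fin (k+l)) (Fin (k+l)) ℂ) m i) = 0 := by
      have h4 : ((↑(u⁻¹) : Matrix (Fin (k+l)) (Fin (k+l)) ℂ)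
          * (↑u : Matrix (Fin (k+l)) (Fin (k+l)) ℂ)).mulVec
          (fun m => (↑P : Matrix (Fin (k+l)) (Fin (k+l)) ℂ) m i) = 0 := by
        rw [← Matrix.mulVec_mulVec, hker, Matrix.mulVec_zero]
      rwa [u.inv_mul, Matrix.one_mulVec] at h4
    exact hpne i h5
  -- modulus-one facts
  have hd1 : ∀ i, d i * starRingEnd ℂ (d i) = 1 := by
    intro i
    have h := huni (d i) (hspec i)
    rw [Complex.mul_conj, Complex.normSq_eq_norm_sq, h]
    norm_num
  have hdkey : ∀ a b, d a * starRingEnd ℂ (d b) = 1 → d a = d b := by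
    intro a b h
    calc d a = d a * (starRingEnd ℂ (d b) * d b) := by
          rw [mul_comm (starRingEnd ℂ (d b)), hd1 b, mul_one]
      _ = (d a * starRingEnd ℂ (d b)) * d b := by ring
      _ = d b := by rw [h, one_mul]
  -- the Gram matrix of the columns of P
  set G : Matrix (Fin (k+l)) (Fin (k+l)) ℂ := gram k l (↑P) with hGdef
  have hGapply : ∀ a b, G a b = hform k l (fun m => (↑P : Matrix (Fin (k+l)) (Fin (k+l)) ℂ) m a)
      (fun m => (↑P : Matrix (Fin (k+l)) (Fin (k+l)) ℂ) m b) := fun a b => rfl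
  have hGblock : ∀ a b, d a ≠ d b → G a b = 0 := by
    intro a b hab
    by_contra h0
    apply hab
    apply hdkey
    have h1 := hU (fun m => (↑P : Matrix (Fin (k+l)) (Fin (k+l)) ℂ) m a)
      (fun m => (↑P : Matrix (Fin (k+l)) (Fin (k+l)) ℂ) m b)
    rw [colEig _ hAP a, colEig _ hAP b, hform_smul_left, hform_smul_right] at h1
    have h2 : (d a * starRingEnd ℂ (d b)) * G a b = 1 * G a b := by
      rw [hGapply, one_mul, mul_assoc]
      exact h1
    exact mul_right_cancel₀ h0 h2
  have hGherm : G.IsHermitian := by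
    rw [Matrix.IsHermitian]
    ext a b
    rw [Matrix.conjTranspose_apply, hGapply, hGapply]
    exact hform_conj _ _
  -- determinants
  have hdetP : (↑P : Matrix (Fin (k+l)) (Fin (k+l)) ℂ).det ≠ 0 := by
    have h : IsUnit (↑P : Matrix (Fin (k+l)) (Fin (k+l)) ℂ) := P.isUnit
    exact ((Matrix.isUnit_iff_isUnit_det _).mp h).ne_zero
  have hdetJ : (JM k l).det ≠ 0 := by
    rw [JM, Matrix.det_diagonal]
    rw [Finset.prod_ne_zero_iff]
    intro i _
    split <;> simp
  have hdetG : G.det ≠ 0 := by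
    rw [hGdef, gram_eq, Matrix.det_mul, Matrix.det_mul, Matrix.det_transpose]
    refine mul_ne_zero (mul_ne_zero hdetP hdetJ) ?_
    rw [← RingHom.mapMatrix_apply, ← RingHom.map_det]
    exact fun h => hdetP ((starRingEnd ℂ).injective (by rw [h, map_zero]))
  -- the blockwise unitary R and the diagonal entries c
  set R : Matrix (Fin (k+l)) (Fin (k+l)) ℂ := Rmat d G hGherm with hRdef
  set c : Fin (k+l) → ℂ := cdiag d G hGherm with hcdef
  have hRR : Rᴴ * R = 1 := Rmat_unitary d G hGherm
  have hRGR : Rᴴ * G * R = Matrix.diagonal c := Rmat_spec d G hGherm hGblock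
  have hdetR : R.det ≠ 0 := by
    intro h0
    have h := congrArg Matrix.det hRR
    rw [Matrix.det_mul, Matrix.det_one, h0, mul_zero] at h
    exact zero_ne_one h
  have hcre : ∀ i, (c i).re ≠ 0 := by
    have hprod : (∏ i, c i) ≠ 0 := by
      have h1 := congrArg Matrix.det hRGR
      rw [Matrix.det_mul, Matrix.det_mul, Matrix.det_diagonal] at h1
      rw [← h1]
      refine mul_ne_zero (mul_ne_zero ?_ hdetG) hdetR
      rw [Matrix.det_conjTranspose]
      exact star_ne_zero.mpr hdetR
    intro i h0
    have hci : c i ≠ 0 := Finset.prod_ne_zero_iff.mp hprod i (Finset.mem_univ i)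
    apply hci
    have h2 : c i = ((c i).re : ℂ) := cdiag_real d G hGherm i
    rw [h2, h0, Complex.ofReal_zero]
  -- the final eigenvector matrix M = P * conj R
  set Q : Matrix (Fin (k+l)) (Fin (k+l)) ℂ := R.map (starRingEnd ℂ) with hQdef
  have hQT : Qᵀ = Rᴴ := by
    ext a b
    rw [hQdef, Matrix.transpose_apply, Matrix.map_apply, Matrix.conjTranspose_apply,
      starRingEnd_apply]
  have hQmap : Q.map (starRingEnd ℂ) = R := by
    ext a b
    rw [hQdef, Matrix.map_apply, Matrix.map_apply, Complex.conj_conj]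
  set M : Matrix (Fin (k+l)) (Fin (k+l)) ℂ := (↑P : Matrix (Fin (k+l)) (Fin (k+l)) ℂ) * Q
    with hMdef
  have hQD : Q * Matrix.diagonal d = Matrix.diagonal d * Q := by
    ext a b
    rw [Matrix.mul_diagonal, Matrix.diagonal_mul]
    by_cases hab : d a = d b
    · rw [hab, mul_comm]
    · have h : R a b = 0 := Rmat_support d G hGherm hab
      rw [hQdef, Matrix.map_apply, h, map_zero, zero_mul, mul_zero]
  have hAM : A * M = M * Matrix.diagonal d := by
    rw [hMdef]
    calc A * ((↑P : Matrix (Fin (k+l)) (Fin (k+l)) ℂ) * Q)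
        = (A * (↑P : Matrix (Fin (k+l)) (Fin (k+l)) ℂ)) * Q := by
          rw [Matrix.mul_assoc]
      _ = ((↑P : Matrix (Fin (k+l)) (Fin (k+l)) ℂ) * Matrix.diagonal d) * Q := by rw [hAP]
      _ = (↑P : Matrix (Fin (k+l)) (Fin (k+l)) ℂ) * (Matrix.diagonal d * Q) := by
          rw [Matrix.mul_assoc]
      _ = (↑P : Matrix (Fin (k+l)) (Fin (k+l)) ℂ) * (Q * Matrix.diagonal d) := by rw [hQD]
      _ = ((↑P : Matrix (Fin (k+l)) (Fin (k+l)) ℂ) * Q) * Matrix.diagonal d := by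
          rw [Matrix.mul_assoc]
  have hgramM : gram k l M = Matrix.diagonal c := by
    rw [hMdef, gram_mul, hQT, hQmap, ← hGdef, hRGR]
  have hdetM : M.det ≠ 0 := by
    rw [hMdef, Matrix.det_mul]
    refine mul_ne_zero hdetP ?_
    rw [hQdef, ← RingHom.mapMatrix_apply, ← RingHom.map_det]
    exact fun h => hdetR ((starRingEnd ℂ).injective (by rw [h, map_zero]))
  have hMinv : Invertible M :=
    Classical.choice ((Matrix.isUnit_iff_isUnit_det M).mpr
      (isUnit_iff_ne_zero.mpr hdetM)).nonempty_invertible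
  set b0 : Module.Basis (Fin (k+l)) ℂ (Fin (k+l) → ℂ) :=
    (Pi.basisFun ℂ (Fin (k+l))).map (Matrix.toLinearEquiv' M hMinv) with hb0def
  have hb0 : ∀ j, b0 j = fun m => M m j := by
    intro j
    rw [hb0def, Module.Basis.map_apply, Pi.basisFun_apply]
    show Matrix.toLin' M (Pi.single j 1) = _
    rw [Matrix.toLin'_apply, Matrix.mulVec_single]
    funext m
    simp
  have hform_b0 : ∀ i j, hform k l (b0 i) (b0 j) = Matrix.diagonal c i j := by
    intro i j
    rw [hb0 i, hb0 j, ← hgramM]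
    rfl
    -- expansion of the form on combinations of the b0 basis
  have hexp : ∀ (s : Finset (Fin (k+l))) (f : Fin (k+l) → ℂ),
      (hform k l (∑ i ∈ s, f i • b0 i) (∑ i ∈ s, f i • b0 i)).re
        = ∑ i ∈ s, Complex.normSq (f i) * (c i).re := by
    intro s f
    rw [hform_sum_left]
    have h1 : ∀ i ∈ s, hform k l (f i • b0 i) (∑ j ∈ s, f j • b0 j)
        = (Complex.normSq (f i) : ℂ) * c i := by
      intro i hi
      rw [hform_sum_right]
      rw [Finset.sum_eq_single_of_mem i hi]
      · rw [hform_smul_left, hform_smul_right, hform_b0, Matrix.diagonal_apply_eq,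
          ← mul_assoc, Complex.mul_conj]
      · intro j hj hji
        rw [hform_smul_left, hform_smul_right, hform_b0,
          Matrix.diagonal_apply_ne c (Ne.symm hji), mul_zero, mul_zero]
    rw [Finset.sum_congr rfl h1, Complex.re_sum]
    exact Finset.sum_congr rfl fun i _ => Complex.re_ofReal_mul _ _
  -- representation of span elements
  have hspanrep : ∀ (s : Finset (Fin (k+l))) (u : Fin (k+l) → ℂ),
      u ∈ Submodule.span ℂ (Set.range fun i : {x // x ∈ s} => b0 i.1) →
      ∃ f : Fin (k+l) → ℂ, u = ∑ i ∈ s, f i • b0 i := by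
    intro s u hu
    obtain ⟨g, hg⟩ := (Submodule.mem_span_range_iff_exists_fun ℂ).mp hu
    refine ⟨fun i => if h : i ∈ s then g ⟨i, h⟩ else 0, ?_⟩
    rw [← hg]
    have h2 : ∑ i : {x // x ∈ s}, g i • b0 i.1
        = ∑ i ∈ s.attach,
            (fun x : Fin (k+l) => if h : x ∈ s then g ⟨x, h⟩ else 0) i.1 • b0 i.1 :=
      Finset.sum_congr (Finset.univ_eq_attach s) fun x _ => by
        beta_reduce
        rw [dif_pos x.2]
    rw [h2, Finset.sum_attach s
      (fun x => (if h : x ∈ s then g ⟨x, h⟩ else 0) • b0 x)]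
  -- finrank of spans of subfamilies of b0
  have hfr : ∀ s : Finset (Fin (k+l)),
      Module.finrank ℂ
        ↥(Submodule.span ℂ (Set.range fun i : {x // x ∈ s} => b0 i.1)) = s.card := by
    intro s
    have hli : LinearIndependent ℂ (fun i : {x // x ∈ s} => b0 i.1) :=
      b0.linearIndependent.comp Subtype.val Subtype.val_injective
    rw [finrank_span_eq_card hli]
    exact Fintype.card_coe s
  -- standard coordinate subspaces
  set SPos : Submodule ℂ (Fin (k+l) → ℂ) := Submodule.span ℂ
    (Set.range fun i : {x : Fin (k+l) // k ≤ (x:ℕ)} => Pi.single i.1 (1:ℂ)) with hSPosdef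
  set SNeg : Submodule ℂ (Fin (k+l) → ℂ) := Submodule.span ℂ
    (Set.range fun i : {x : Fin (k+l) // (x:ℕ) < k} => Pi.single i.1 (1:ℂ)) with hSNegdef
  have eposE : {x : Fin (k+l) // k ≤ (x:ℕ)} ≃ Fin l :=
    { toFun := fun x => ⟨(x.1:ℕ) - k, by have h1 := x.1.isLt; have h2 := x.2; omega⟩
      invFun := fun y => ⟨⟨k + (y:ℕ), by have := y.isLt; omega⟩, Nat.le_add_right k y⟩
      left_inv := fun x => Subtype.ext (Fin.ext (by
        show k + ((x.1:ℕ) - k) = (x.1:ℕ); have h2 := x.2; omega))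
      right_inv := fun y => Fin.ext (by
        show k + (y:ℕ) - k = (y:ℕ); omega) }
  have enegE : {x : Fin (k+l) // (x:ℕ) < k} ≃ Fin k :=
    { toFun := fun x => ⟨(x.1:ℕ), x.2⟩
      invFun := fun y => ⟨⟨(y:ℕ), by have := y.isLt; omega⟩, y.isLt⟩
      left_inv := fun x => Subtype.ext (Fin.ext rfl)
      right_inv := fun y => Fin.ext rfl }
  have hfrSPos : Module.finrank ℂ ↥SPos = l := by
    rw [hSPosdef]
    have hli : LinearIndependent ℂ
        (fun i : {x : Fin (k+l) // k ≤ (x:ℕ)} => (Pi.single i.1 1 : Fin (k+l) → ℂ)) := by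
      have heq : (fun i : {x : Fin (k+l) // k ≤ (x:ℕ)} => (Pi.single i.1 1 : Fin (k+l) → ℂ))
          = fun i => (Pi.basisFun ℂ (Fin (k+l))) i.1 := by
        funext i; rw [Pi.basisFun_apply]
      rw [heq]
      exact (Pi.basisFun ℂ (Fin (k+l))).linearIndependent.comp Subtype.val Subtype.val_injective
    rw [finrank_span_eq_card hli, Fintype.card_congr eposE, Fintype.card_fin]
  have hfrSNeg : Module.finrank ℂ ↥SNeg = k := by
    rw [hSNegdef]
    have hli : LinearIndependent ℂ
        (fun i : {x : Fin (k+l) // (x:ℕ) < k} => (Pi.single i.1 1 : Fin (k+l) → ℂ)) := by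
      have heq : (fun i : {x : Fin (k+l) // (x:ℕ) < k} => (Pi.single i.1 1 : Fin (k+l) → ℂ))
          = fun i => (Pi.basisFun ℂ (Fin (k+l))) i.1 := by
        funext i; rw [Pi.basisFun_apply]
      rw [heq]
      exact (Pi.basisFun ℂ (Fin (k+l))).linearIndependent.comp Subtype.val Subtype.val_injective
    rw [finrank_span_eq_card hli, Fintype.card_congr enegE, Fintype.card_fin]
  have hSPosmem : ∀ u ∈ SPos, ∀ j : Fin (k+l), (j:ℕ) < k → u j = 0 := by
    intro u hu j hj
    obtain ⟨g, hg⟩ := (Submodule.mem_span_range_iff_exists_fun ℂ).mp hu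
    rw [← hg, Finset.sum_apply]
    refine Finset.sum_eq_zero fun x _ => ?_
    have hne : j ≠ x.1 := by
      intro h
      have h2 := x.2
      rw [← h] at h2
      omega
    rw [Pi.smul_apply, Pi.single_apply, if_neg hne, smul_zero]
  have hSNegmem : ∀ u ∈ SNeg, ∀ j : Fin (k+l), k ≤ (j:ℕ) → u j = 0 := by
    intro u hu j hj
    obtain ⟨g, hg⟩ := (Submodule.mem_span_range_iff_exists_fun ℂ).mp hu
    rw [← hg, Finset.sum_apply]
    refine Finset.sum_eq_zero fun x _ => ?_
    have hne : j ≠ x.1 := by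
      intro h
      have h2 := x.2
      rw [← h] at h2
      omega
    rw [Pi.smul_apply, Pi.single_apply, if_neg hne, smul_zero]
  -- the sign sets
  set NegF : Finset (Fin (k+l)) := Finset.univ.filter (fun i => (c i).re < 0) with hNegFdef
  set PosF : Finset (Fin (k+l)) := Finset.univ.filter (fun i => ¬ (c i).re < 0) with hPosFdef
  have hcards : NegF.card + PosF.card = k + l := by
    rw [hNegFdef, hPosFdef, Finset.card_filter_add_card_filter_not,
      Finset.card_univ, Fintype.card_fin]
  have hmemNeg : ∀ i, i ∈ NegF ↔ (c i).re < 0 := by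
    intro i
    rw [hNegFdef, Finset.mem_filter]
    simp
  have hmemPos : ∀ i, i ∈ PosF ↔ ¬ (c i).re < 0 := by
    intro i
    rw [hPosFdef, Finset.mem_filter]
    simp
  -- inequality 1
  have hineq1 : NegF.card + l ≤ k + l := by
    have hdisj : Disjoint
        (Submodule.span ℂ (Set.range fun i : {x // x ∈ NegF} => b0 i.1)) SPos := by
      rw [Submodule.disjoint_def]
      intro u hu1 hu2
      obtain ⟨f, rfl⟩ := hspanrep NegF u hu1
      have h2 : 0 ≤ (hform k l (∑ i ∈ NegF, f i • b0 i) (∑ i ∈ NegF, f i • b0 i)).re := by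
        rw [hform_self_re]
        refine Finset.sum_nonneg fun j _ => ?_
        by_cases hj : (j:ℕ) < k
        · rw [if_pos hj, hSPosmem _ hu2 j hj]
          simp
        · rw [if_neg hj, one_mul]
          exact Complex.normSq_nonneg _
      rw [hexp] at h2
      have h3 : ∀ i ∈ NegF, Complex.normSq (f i) * (c i).re ≤ 0 := by
        intro i hi
        have hlt : (c i).re < 0 := (hmemNeg i).mp hi
        nlinarith [Complex.normSq_nonneg (f i)]
      have h4 : ∑ i ∈ NegF, Complex.normSq (f i) * (c i).re = 0 :=
        le_antisymm (Finset.sum_nonpos h3) h2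
      have h5 := (Finset.sum_eq_zero_iff_of_nonpos h3).mp h4
      refine Finset.sum_eq_zero fun i hi => ?_
      have hlt : (c i).re < 0 := (hmemNeg i).mp hi
      have h7 : Complex.normSq (f i) = 0 := by
        rcases mul_eq_zero.mp (h5 i hi) with h | h
        · exact h
        · exact absurd h hlt.ne
      rw [Complex.normSq_eq_zero] at h7
      rw [h7, zero_smul]
    have hle := Submodule.finrank_add_finrank_le_of_disjoint hdisj
    rw [hfr NegF, hfrSPos] at hle
    calc NegF.card + l ≤ Module.finrank ℂ (Fin (k+l) → ℂ) := hle
      _ = k + l := by rw [Module.finrank_pi, Fintype.card_fin]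
  -- inequality 2
  have hineq2 : PosF.card + k ≤ k + l := by
    have hdisj : Disjoint
        (Submodule.span ℂ (Set.range fun i : {x // x ∈ PosF} => b0 i.1)) SNeg := by
      rw [Submodule.disjoint_def]
      intro u hu1 hu2
      obtain ⟨f, rfl⟩ := hspanrep PosF u hu1
      have h2 : (hform k l (∑ i ∈ PosF, f i • b0 i) (∑ i ∈ PosF, f i • b0 i)).re ≤ 0 := by
        rw [hform_self_re]
        refine Finset.sum_nonpos fun j _ => ?_
        by_cases hj : (j:ℕ) < k
        · rw [if_pos hj]
          nlinarith [Complex.normSq_nonneg ((∑ i ∈ PosF, f i • b0 i) j)]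
        · rw [if_neg hj, hSNegmem _ hu2 j (le_of_not_gt hj), one_mul]
          simp
      rw [hexp] at h2
      have h3 : ∀ i ∈ PosF, 0 ≤ Complex.normSq (f i) * (c i).re := by
        intro i hi
        have hge : 0 ≤ (c i).re := le_of_not_gt ((hmemPos i).mp hi)
        exact mul_nonneg (Complex.normSq_nonneg _) hge
      have h4 : ∑ i ∈ PosF, Complex.normSq (f i) * (c i).re = 0 :=
        le_antisymm h2 (Finset.sum_nonneg h3)
      have h5 := (Finset.sum_eq_zero_iff_of_nonneg h3).mp h4
      refine Finset.sum_eq_zero fun i hi => ?_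
      have hne : (c i).re ≠ 0 := hcre i
      have h7 : Complex.normSq (f i) = 0 := by
        rcases mul_eq_zero.mp (h5 i hi) with h | h
        · exact h
        · exact absurd h hne
      rw [Complex.normSq_eq_zero] at h7
      rw [h7, zero_smul]
    have hle := Submodule.finrank_add_finrank_le_of_disjoint hdisj
    rw [hfr PosF, hfrSNeg] at hle
    calc PosF.card + k ≤ Module.finrank ℂ (Fin (k+l) → ℂ) := hle
      _ = k + l := by rw [Module.finrank_pi, Fintype.card_fin]
  have hNegcard : NegF.card = k := by omega
  have hPoscard : PosF.card = l := by omega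
  -- the permutation
  have eneg : Fin k ≃ {x // x ∈ NegF} := (NegF.equivFinOfCardEq hNegcard).symm
  have epos : Fin l ≃ {x // x ∈ PosF} := (PosF.equivFinOfCardEq hPoscard).symm
  have eN : {x // x ∈ NegF} ≃ {x : Fin (k+l) // (c x).re < 0} :=
    Equiv.subtypeEquivRight hmemNeg
  have eP : {x // x ∈ PosF} ≃ {x : Fin (k+l) // ¬ (c x).re < 0} :=
    Equiv.subtypeEquivRight hmemPos
  set σ : Fin (k+l) ≃ Fin (k+l) :=
    (finSumFinEquiv.symm.trans ((eneg.trans eN).sumCongr (epos.trans eP))).trans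
      (Equiv.sumCompl fun i => (c i).re < 0) with hσdef
  have hσ1 : ∀ j : Fin (k+l), (j:ℕ) < k → (c (σ j)).re < 0 := by
    intro j hj
    have hcast : j = Fin.castAdd l ⟨(j:ℕ), hj⟩ := Fin.ext rfl
    have : σ j = ((eneg.trans eN) ⟨(j:ℕ), hj⟩).1 := by
      rw [hσdef]
      simp only [Equiv.trans_apply]
      conv_lhs => rw [hcast, finSumFinEquiv_symm_apply_castAdd]
      rw [Equiv.sumCongr_apply, Sum.map_inl, Equiv.sumCompl_apply_inl]
      rfl
    rw [this]
    exact ((eneg.trans eN) ⟨(j:ℕ), hj⟩).2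
  have hσ2 : ∀ j : Fin (k+l), k ≤ (j:ℕ) → ¬ (c (σ j)).re < 0 := by
    intro j hj
    have hj2 : (j:ℕ) - k < l := by have := j.isLt; omega
    have hcast : j = Fin.natAdd k ⟨(j:ℕ) - k, hj2⟩ := Fin.ext (by
      show (j:ℕ) = k + ((j:ℕ) - k); omega)
    have : σ j = ((epos.trans eP) ⟨(j:ℕ) - k, hj2⟩).1 := by
      rw [hσdef]
      simp only [Equiv.trans_apply]
      conv_lhs => rw [hcast, finSumFinEquiv_symm_apply_natAdd]
      rw [Equiv.sumCongr_apply, Sum.map_inr, Equiv.sumCompl_apply_inr]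
      rfl
    rw [this]
    exact ((epos.trans eP) ⟨(j:ℕ) - k, hj2⟩).2
  -- assemble
  refine ⟨b0.reindex σ.symm, fun j => ?_⟩
  rw [Module.Basis.reindex_apply, Equiv.symm_symm]
  have hval : hform k l (b0 (σ j)) (b0 (σ j)) = c (σ j) := by
    rw [hform_b0, Matrix.diagonal_apply_eq]
  refine ⟨⟨d (σ j), ?_⟩, ?_, ?_⟩
  · rw [hb0 (σ j)]
    exact colEig M hAM (σ j)
  · intro hj
    rw [hval]
    exact hσ1 j hj
  · intro hj
    rw [hval]
    exact lt_of_le_of_ne (not_lt.mp (hσ2 j hj)) (Ne.symm (hcre (σ j)))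
end
end
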